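/- arXiv:1006.1464 — 11 statements merged into one kernel-verified Lean document; each statement's English description precedes it below -/
import Mathlib

section
/- Let c_1, c_2, ... be indeterminates and define formal power series C = 1 + c_1 + c_2 + ... (with c_i of degree i) and \bar{C} = 1 + \bar{c}_1 + \bar{c}_2 + ... determined by the relation C\bar{C} = 1, so that each \bar{c}_i is a polynomial in c_1,...,c_i. Then for all positive integers i, j and all l ≥ 0 (with j ≤ i), the partial derivatives satisfy ∂\bar{c}_i/∂c_j = ∂\bar{c}_{i+l}/∂c_{j+l}. -/
open MvPolynomial

/-- The components `c̄ₙ` of the inverse of `C = 1 + c₁ + c₂ + ⋯`, defined by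
`c̄₀ = 1` and `c̄ₙ = -(c₁c̄_{n-1} + c₂c̄_{n-2} + ⋯ + cₙc̄₀)`, as polynomials in the
independent variables `cᵢ = X i` (`i ≥ 1`). -/
noncomputable def cbar : ℕ → MvPolynomial ℕ ℚ
  | 0 => 1
  | (n + 1) => -∑ j ∈ Finset.range (n + 1), X (j + 1) * cbar (n - j)
  decreasing_by omega

lemma cbar_succ (n : ℕ) :
    cbar (n + 1) = -∑ j ∈ Finset.range (n + 1), X (j + 1) * cbar (n - j) := by
  rw [cbar]

/-- The key shift lemma: `∂c̄ₙ/∂cⱼ = ∂c̄_{n+1}/∂c_{j+1}` for `j ≥ 1`. -/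
lemma pderiv_cbar_succ : ∀ n j : ℕ, 1 ≤ j →
    pderiv j (cbar n) = pderiv (j + 1) (cbar (n + 1)) := by
  intro n
  induction n using Nat.strong_induction_on with
  | _ n ih =>
    intro j hj
    cases n with
    | zero =>
      rw [show cbar 1 = -(X 1 * cbar 0) by rw [cbar_succ]; simp]
      simp [cbar, pderiv_X_of_ne (show j + 1 ≠ 1 by omega),
        Pi.single_eq_of_ne (show (1 : ℕ) ≠ j + 1 by omega)]
    | succ m =>
      rw [cbar_succ m, cbar_succ (m + 1), map_neg, map_neg, map_sum, map_sum]
      simp only [pderiv_mul]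
      rw [Finset.sum_add_distrib, Finset.sum_add_distrib]
      rw [neg_inj]
      congr 1
      · conv_rhs => rw [Finset.sum_range_succ']
        rw [pderiv_X_of_ne (show 0 + 1 ≠ j + 1 by omega), zero_mul, add_zero]
        apply Finset.sum_congr rfl
        intro t ht
        rw [show m + 1 - (t + 1) = m - t by omega]
        by_cases h : j = t + 1
        · subst h; rw [pderiv_X_self, pderiv_X_self]
        · rw [pderiv_X_of_ne (by omega), pderiv_X_of_ne (by omega)]
      · conv_rhs => rw [Finset.sum_range_succ]
        rw [show cbar (m + 1 - (m + 1)) = 1 by simp [cbar]]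
        rw [show (pderiv (j + 1) (1 : MvPolynomial ℕ ℚ)) = 0 by simp, mul_zero, add_zero]
        apply Finset.sum_congr rfl
        intro t ht
        simp only [Finset.mem_range] at ht
        rw [show m + 1 - t = (m - t) + 1 by omega, ← ih (m - t) (by omega) j hj]

/-- for all `1 ≤ j ≤ i` and `l ≥ 0`,
`∂c̄ᵢ/∂cⱼ = ∂c̄_{i+l}/∂c_{j+l}`. -/
theorem pderiv_cbar_shift (i j l : ℕ) (hj : 1 ≤ j) (hji : j ≤ i) :
    pderiv j (cbar i) = pderiv (j + l) (cbar (i + l)) := by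
  induction l with
  | zero => rfl
  | succ l ihl =>
    rw [show j + (l + 1) = (j + l) + 1 by omega, show i + (l + 1) = (i + l) + 1 by omega,
      ← pderiv_cbar_succ (i + l) (j + l) (by omega)]
    exact ihl
end

section
/- In the polynomial ring ℤ[c_1, c_2], the ideal generated by the two polynomials \bar{c}_4 and \bar{c}_5 (the degree-4 and degree-5 components of the inverse series of 1 + c_1 + c_2) equals the ideal generated by the two partial derivatives ∂V/∂c_1 and ∂V/∂c_2 of the potential V = -c_1^6/6 + c_1^4 c_2 - (3/2) c_1^2 c_2^2 + c_2^3/3, after clearing denominators (i.e., over ℚ the Jacobi ideal of V equals the ideal (\bar{c}_4, \bar{c}_5)). -/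
open MvPolynomial

/-- In ℚ[c₁,c₂], the Jacobi ideal of the Gepner potential
`V = -c₁⁶/6 + c₁⁴c₂ - (3/2)c₁²c₂² + c₂³/3` equals the ideal generated by
the degree-4 and degree-5 components `c̄₄, c̄₅` of the inverse series of `1 + c₁ + c₂`.
Here `c₁ = X 0`, `c₂ = X 1`. -/
theorem gepner_potential_Gr25 :
    let c1 : MvPolynomial (Fin 2) ℚ := X 0
    let c2 : MvPolynomial (Fin 2) ℚ := X 1
    let cbar4 : MvPolynomial (Fin 2) ℚ := c1 ^ 4 - 3 * c1 ^ 2 * c2 + c2 ^ 2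
    let cbar5 : MvPolynomial (Fin 2) ℚ := -c1 ^ 5 + 4 * c1 ^ 3 * c2 - 3 * c1 * c2 ^ 2
    let V : MvPolynomial (Fin 2) ℚ :=
      -(C (1/6 : ℚ)) * c1 ^ 6 + c1 ^ 4 * c2 - C (3/2 : ℚ) * c1 ^ 2 * c2 ^ 2
        + C (1/3 : ℚ) * c2 ^ 3
    Ideal.span {pderiv 0 V, pderiv 1 V} = Ideal.span {cbar4, cbar5} := by
  intro c1 c2 cbar4 cbar5 V
  have h0 : pderiv 0 V = cbar5 := by
    simp only [V, cbar5, c1, c2, map_add, map_sub, map_mul, map_neg, Derivation.leibniz_pow,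
      pderiv_X, pderiv_C]
    simp [Pi.single_apply]
    rw [← map_ofNat (C : ℚ →+* _) 6, ← map_ofNat (C : ℚ →+* _) 2]
    simp only [mul_comm, mul_left_comm, ← C_mul]
    norm_num [map_ofNat]
  have h1 : pderiv 1 V = cbar4 := by
    simp only [V, cbar4, c1, c2, map_add, map_sub, map_mul, map_neg, Derivation.leibniz_pow,
      pderiv_X, pderiv_C]
    simp [Pi.single_apply]
    rw [← map_ofNat (C : ℚ →+* _) 2, ← map_ofNat (C : ℚ →+* _) 3]
    simp only [mul_comm, mul_left_comm, ← C_mul]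
    norm_num [map_ofNat]
  rw [h0, h1, Set.pair_comm]
end

section
/- Let x_1, x_3, x_5, ... be independent variables and define x_2, x_4, x_6, ... recursively by the relations x_i^2 + 2Σ_{k≥1}(-1)^k x_{i+k}x_{i-k} + (-1)^i x_{2i} = 0 (with x_0 = 1 and x_j = 0 interpreted appropriately), equivalently by (X_+ + X_-)(X_+ - X_- - 1) = X_- where X_+ = 1 + x_2 + x_4 + ... and X_- = x_1 + x_3 + x_5 + .... Then for all n, m, k the partial derivative identity ∂x_{2(n+k)}/∂x_{2(m+k)+1} = ∂x_{2n}/∂x_{2m+1} holds. -/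
open MvPolynomial


private noncomputable abbrev OGrR := MvPolynomial ℕ ℚ

private noncomputable def OGrE (x : ℕ → OGrR) : PowerSeries OGrR :=
  PowerSeries.mk fun n => if n % 2 = 0 then x n else 0

private noncomputable def OGrO (x : ℕ → OGrR) : PowerSeries OGrR :=
  PowerSeries.mk fun n => if n % 2 = 1 then x n else 0

private noncomputable def OGrD (m : ℕ) (f : PowerSeries OGrR) : PowerSeries OGrR :=
  PowerSeries.mk fun n => pderiv m (PowerSeries.coeff (R := OGrR) n f)

private lemma OGr_coeff_E (x : ℕ → OGrR) (n : ℕ) :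
    PowerSeries.coeff (R := OGrR) n (OGrE x) = if n % 2 = 0 then x n else 0 :=
  PowerSeries.coeff_mk _ _

private lemma OGr_coeff_O (x : ℕ → OGrR) (n : ℕ) :
    PowerSeries.coeff (R := OGrR) n (OGrO x) = if n % 2 = 1 then x n else 0 :=
  PowerSeries.coeff_mk _ _

private lemma OGr_coeff_D (m n : ℕ) (f : PowerSeries OGrR) :
    PowerSeries.coeff (R := OGrR) n (OGrD m f) = pderiv m (PowerSeries.coeff (R := OGrR) n f) :=
  PowerSeries.coeff_mk _ _

private lemma OGr_D_add (m : ℕ) (f g : PowerSeries OGrR) :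
    OGrD m (f + g) = OGrD m f + OGrD m g := by
  ext n
  simp [OGr_coeff_D]

private lemma OGr_D_mul (m : ℕ) (f g : PowerSeries OGrR) :
    OGrD m (f * g) = OGrD m f * g + f * OGrD m g := by
  ext n
  simp only [OGr_coeff_D, PowerSeries.coeff_mul, map_add, map_sum, pderiv_mul,
    Finset.sum_add_distrib]

private lemma OGr_keyrel (x : ℕ → OGrR) (h0 : x 0 = 1)
    (hrel : ∀ i, 1 ≤ i →
      (x i) ^ 2
        + 2 * ∑ k ∈ Finset.range (i - 1), (-1 : OGrR) ^ (k + 1)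
            * (x (i + (k + 1)) * x (i - (k + 1)))
        + (-1 : OGrR) ^ i * x (2 * i) = 0) (i : ℕ) :
    ∑ a ∈ Finset.range (2 * i + 1), (-1 : OGrR) ^ a * (x a * x (2 * i - a))
      = x (2 * i) := by
  rcases Nat.eq_zero_or_pos i with hi | hi
  · subst hi; simp [h0]
  obtain ⟨j, rfl⟩ : ∃ j, i = j + 1 := ⟨i - 1, by omega⟩
  set i := j + 1 with hij
  set g : ℕ → OGrR := fun a => (-1) ^ a * (x a * x (2 * i - a)) with hg
  have hsplit : ∑ a ∈ Finset.range (2 * i + 1), g a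
      = (∑ a ∈ Finset.range (i + 1), g a) + ∑ a ∈ Finset.Ico (i + 1) (2 * i + 1), g a := by
    rw [Finset.range_eq_Ico, Finset.range_eq_Ico]
    exact (Finset.sum_Ico_consecutive g (show 0 ≤ i + 1 by omega) (show i + 1 ≤ 2 * i + 1 by omega)).symm
  have hico : ∑ a ∈ Finset.Ico (i + 1) (2 * i + 1), g a
      = ∑ b ∈ Finset.range i, g (i + 1 + b) := by
    rw [Finset.sum_Ico_eq_sum_range, show 2 * i + 1 - (i + 1) = i from by omega]
  have hrefl : ∑ b ∈ Finset.range i, g b = ∑ b ∈ Finset.range i, g (i + 1 + b) := by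
    rw [← Finset.sum_range_reflect]
    refine Finset.sum_congr rfl fun b hb => ?_
    rw [Finset.mem_range] at hb
    have h1 : 2 * i - (i - 1 - b) = i + 1 + b := by omega
    have h2 : 2 * i - (i + 1 + b) = i - 1 - b := by omega
    have hsgn : (-1 : OGrR) ^ (i - 1 - b) = (-1 : OGrR) ^ (i + 1 + b) := by
      rw [neg_one_pow_eq_pow_mod_two, neg_one_pow_eq_pow_mod_two (n := i + 1 + b)]
      congr 1
      omega
    simp only [hg, h1, h2, hsgn]
    ring
  have hlast : ∑ b ∈ Finset.range i, g (i + 1 + b)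
      = (∑ b ∈ Finset.range j, g (i + 1 + b)) + x (2 * i) := by
    rw [hij, Finset.sum_range_succ]
    congr 1
    simp only [hg]
    rw [show j + 1 + 1 + j = 2 * (j + 1) from by omega,
      show 2 * (j + 1) - 2 * (j + 1) = 0 from by omega, h0, pow_mul]
    norm_num
  have hterm : ∀ b ∈ Finset.range j,
      g (i + 1 + b) = (-1 : OGrR) ^ i * ((-1) ^ (b + 1) * (x (i + (b + 1)) * x (i - (b + 1)))) := by
    intro b hb
    rw [Finset.mem_range] at hb
    simp only [hg]
    rw [show i + 1 + b = i + (b + 1) from by omega,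
      show 2 * i - (i + (b + 1)) = i - (b + 1) from by omega, pow_add]
    ring
  have hg_i : g i = (-1 : OGrR) ^ i * x i ^ 2 := by
    simp only [hg]
    rw [show 2 * i - i = i from by omega]
    ring
  have hh := hrel i hi
  rw [show i - 1 = j from by omega] at hh
  have hsq : (-1 : OGrR) ^ i * (-1 : OGrR) ^ i = 1 := by
    rw [← pow_add, show i + i = 2 * i from by omega, pow_mul]
    norm_num
  calc ∑ a ∈ Finset.range (2 * i + 1), g a
      = ((∑ b ∈ Finset.range i, g b) + g i) + ∑ b ∈ Finset.range i, g (i + 1 + b) := by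
        rw [hsplit, hico, Finset.sum_range_succ]
    _ = g i + 2 * ((∑ b ∈ Finset.range j, g (i + 1 + b)) + x (2 * i)) := by
        rw [hrefl, hlast]; ring
    _ = (-1 : OGrR) ^ i * x i ^ 2
        + 2 * ((-1 : OGrR) ^ i * (∑ b ∈ Finset.range j,
            (-1 : OGrR) ^ (b + 1) * (x (i + (b + 1)) * x (i - (b + 1)))) + x (2 * i)) := by
        rw [hg_i, Finset.sum_congr rfl hterm, Finset.mul_sum]
    _ = x (2 * i) := by linear_combination ((-1 : OGrR) ^ i) * hh - (x (2 * i)) * hsq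
private lemma OGr_EE (x : ℕ → OGrR)
    (hkey : ∀ i : ℕ, ∑ a ∈ Finset.range (2 * i + 1),
        (-1 : OGrR) ^ a * (x a * x (2 * i - a)) = x (2 * i)) :
    OGrE x * OGrE x = OGrO x * OGrO x + OGrE x := by
  refine PowerSeries.ext fun n => ?_
  rw [map_add, PowerSeries.coeff_mul, PowerSeries.coeff_mul]
  rcases Nat.even_or_odd n with hn | hn
  · obtain ⟨i, rfl⟩ := hn
    rw [show i + i = 2 * i from by omega] at *
    have key := hkey i
    have main : (∑ p ∈ Finset.HasAntidiagonal.antidiagonal (2 * i),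
          PowerSeries.coeff (R := OGrR) p.1 (OGrE x) * PowerSeries.coeff (R := OGrR) p.2 (OGrE x))
        - (∑ p ∈ Finset.HasAntidiagonal.antidiagonal (2 * i),
          PowerSeries.coeff (R := OGrR) p.1 (OGrO x) * PowerSeries.coeff (R := OGrR) p.2 (OGrO x))
        = x (2 * i) := by
      rw [← Finset.sum_sub_distrib]
      rw [Finset.Nat.sum_antidiagonal_eq_sum_range_succ_mk
        (fun p => PowerSeries.coeff (R := OGrR) p.1 (OGrE x) * PowerSeries.coeff (R := OGrR) p.2 (OGrE x)
          - PowerSeries.coeff (R := OGrR) p.1 (OGrO x) * PowerSeries.coeff (R := OGrR) p.2 (OGrO x))]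
      rw [← key]
      refine Finset.sum_congr rfl fun a ha => ?_
      rw [Finset.mem_range] at ha
      simp only [OGr_coeff_E, OGr_coeff_O]
      rcases Nat.even_or_odd a with hae | hao
      · have h1 : a % 2 = 0 := Nat.even_iff.mp hae
        have h2 : (2 * i - a) % 2 = 0 := by omega
        rw [if_pos h1, if_pos h2, if_neg (by omega), if_neg (by omega),
          neg_one_pow_eq_pow_mod_two, h1]
        ring
      · have h1 : a % 2 = 1 := Nat.odd_iff.mp hao
        have h2 : (2 * i - a) % 2 = 1 := by omega
        rw [if_neg (by omega), if_neg (by omega), if_pos h1, if_pos h2,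
          neg_one_pow_eq_pow_mod_two, h1]
        ring
    have hce : PowerSeries.coeff (R := OGrR) (2 * i) (OGrE x) = x (2 * i) := by
      rw [OGr_coeff_E, if_pos (by omega)]
    rw [hce]
    linear_combination main
  · have hn1 : n % 2 = 1 := Nat.odd_iff.mp hn
    have hz1 : ∑ p ∈ Finset.HasAntidiagonal.antidiagonal n,
        PowerSeries.coeff (R := OGrR) p.1 (OGrE x) * PowerSeries.coeff (R := OGrR) p.2 (OGrE x) = 0 := by
      refine Finset.sum_eq_zero fun p hp => ?_
      rw [Finset.HasAntidiagonal.mem_antidiagonal] at hp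
      simp only [OGr_coeff_E]
      rcases Nat.even_or_odd p.1 with h | h
      · have := Nat.even_iff.mp h
        exact mul_eq_zero_of_right _ (if_neg (by omega))
      · have := Nat.odd_iff.mp h
        exact mul_eq_zero_of_left (if_neg (by omega)) _
    have hz2 : ∑ p ∈ Finset.HasAntidiagonal.antidiagonal n,
        PowerSeries.coeff (R := OGrR) p.1 (OGrO x) * PowerSeries.coeff (R := OGrR) p.2 (OGrO x) = 0 := by
      refine Finset.sum_eq_zero fun p hp => ?_
      rw [Finset.HasAntidiagonal.mem_antidiagonal] at hp
      simp only [OGr_coeff_O]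
      rcases Nat.even_or_odd p.1 with h | h
      · have := Nat.even_iff.mp h
        exact mul_eq_zero_of_left (if_neg (by omega)) _
      · have := Nat.odd_iff.mp h
        exact mul_eq_zero_of_right _ (if_neg (by omega))
    rw [hz1, hz2, OGr_coeff_E, if_neg (by omega)]
    ring
private lemma OGr_D_O (x : ℕ → OGrR) (hodd : ∀ m, x (2 * m + 1) = X m) (m : ℕ) :
    OGrD m (OGrO x) = PowerSeries.X ^ (2 * m + 1) := by
  refine PowerSeries.ext fun n => ?_
  rw [OGr_coeff_D, OGr_coeff_O, PowerSeries.coeff_X_pow]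
  rcases Nat.even_or_odd n with h | h
  · have h1 := Nat.even_iff.mp h
    rw [if_neg (by omega), if_neg (by omega), map_zero]
  · obtain ⟨j, rfl⟩ := h
    rw [if_pos (by omega), hodd j, pderiv_X, Pi.single_apply]
    by_cases hjm : j = m
    · subst hjm; rw [if_pos rfl, if_pos rfl]
    · rw [if_neg hjm, if_neg (show ¬(2 * j + 1 = 2 * m + 1) from by omega)]

private lemma OGr_unit (x : ℕ → OGrR) (h0 : x 0 = 1) :
    (2 * OGrE x - 1) * (2 * OGrE x - 1).invOfUnit 1 = 1 := by
  refine PowerSeries.mul_invOfUnit _ 1 ?_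
  have hc : PowerSeries.constantCoeff (R := OGrR) (OGrE x) = 1 := by
    rw [← PowerSeries.coeff_zero_eq_constantCoeff_apply, OGr_coeff_E]
    simp [h0]
  rw [two_mul]
  simp [hc]

/-- let `x 0 = 1`, let the odd-indexed `x (2m+1) = X m` be
independent variables, and let the even-indexed `x (2i)` be the polynomials in
the odd variables determined by the relations
`xᵢ² + 2∑_{k=1}^{i-1} (-1)^k x_{i+k} x_{i-k} + (-1)^i x_{2i} = 0` (for `i ≥ 1`).
Then `∂x_{2(n+k)}/∂x_{2(m+k)+1} = ∂x_{2n}/∂x_{2m+1}` for all `n, m, k`. -/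
theorem OGr_pderiv_shift (x : ℕ → MvPolynomial ℕ ℚ)
    (h0 : x 0 = 1)
    (hodd : ∀ m, x (2 * m + 1) = X m)
    (hrel : ∀ i, 1 ≤ i →
      (x i) ^ 2
        + 2 * ∑ k ∈ Finset.range (i - 1), (-1 : MvPolynomial ℕ ℚ) ^ (k + 1)
            * (x (i + (k + 1)) * x (i - (k + 1)))
        + (-1 : MvPolynomial ℕ ℚ) ^ i * x (2 * i) = 0) :
    ∀ n m k : ℕ, pderiv (m + k) (x (2 * (n + k))) = pderiv m (x (2 * n)) := by
  have hEE := OGr_EE x (OGr_keyrel x h0 hrel)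
  have hV := OGr_unit x h0
  set V := (2 * OGrE x - 1).invOfUnit 1 with hVdef
  set G := 2 * OGrO x * V with hGdef
  have key : ∀ m, OGrD m (OGrE x) = G * PowerSeries.X ^ (2 * m + 1) := by
    intro m
    have h1 : OGrD m (OGrE x * OGrE x) = OGrD m (OGrO x * OGrO x + OGrE x) := by
      rw [hEE]
    rw [OGr_D_mul, OGr_D_add, OGr_D_mul, OGr_D_O x hodd] at h1
    have h2 : OGrD m (OGrE x) * (2 * OGrE x - 1)
        = 2 * OGrO x * PowerSeries.X ^ (2 * m + 1) := by
      linear_combination h1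
    calc OGrD m (OGrE x)
        = OGrD m (OGrE x) * ((2 * OGrE x - 1) * V) := by rw [hV, mul_one]
      _ = (OGrD m (OGrE x) * (2 * OGrE x - 1)) * V := by ring
      _ = (2 * OGrO x * PowerSeries.X ^ (2 * m + 1)) * V := by rw [h2]
      _ = G * PowerSeries.X ^ (2 * m + 1) := by rw [hGdef]; ring
  have cform : ∀ n m : ℕ, pderiv m (x (2 * n))
      = if 2 * m + 1 ≤ 2 * n then PowerSeries.coeff (R := OGrR) (2 * n - (2 * m + 1)) G else 0 := by
    intro n m
    have h3 : pderiv m (x (2 * n)) = PowerSeries.coeff (R := OGrR) (2 * n) (OGrD m (OGrE x)) := by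
      rw [OGr_coeff_D, OGr_coeff_E, if_pos (by omega)]
    rw [h3, key m, PowerSeries.coeff_mul_X_pow']
  intro n m k
  rw [cform n m, cform (n + k) (m + k)]
  exact if_congr (by omega) (by rw [show 2 * (n + k) - (2 * (m + k) + 1) = 2 * n - (2 * m + 1) from by omega]) rfl
end

section
/- For n odd, in the polynomial ring ℚ[h, l] with potential V(h,l) = -h^n l + h l^2 + (n/(2(2n-1))) h^{2n-1}, one has ∂V/∂l = -(h^n - 2hl) and ∂V/∂h = l^2 + (n/2) h^{n-2}(h^n - 2hl); consequently the Jacobi ideal (∂V/∂h, ∂V/∂l) equals the ideal (h^n - 2hl, l^2). -/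
open MvPolynomial

/-- for odd `n`, the potential `V = -hⁿl + hl² + (n/(2(2n-1)))h^{2n-1}`
in ℚ[h,l] (with `h = X 0`, `l = X 1`) satisfies
`∂V/∂l = -(hⁿ - 2hl)` and `∂V/∂h = l² + (n/2)h^{n-2}(hⁿ - 2hl)`, and its Jacobi
ideal equals `(hⁿ - 2hl, l²)`, the defining ideal of `H*(Q_{2n-2}, ℚ)`. -/
theorem quadric_potential_odd (n : ℕ) (hn : 3 ≤ n) (hodd : Odd n) :
    let h : MvPolynomial (Fin 2) ℚ := X 0
    let l : MvPolynomial (Fin 2) ℚ := X 1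
    let V : MvPolynomial (Fin 2) ℚ :=
      -(h ^ n * l) + h * l ^ 2 + C ((n : ℚ) / (2 * (2 * n - 1))) * h ^ (2 * n - 1)
    pderiv 1 V = -(h ^ n - 2 * h * l) ∧
    pderiv 0 V = l ^ 2 + C ((n : ℚ) / 2) * h ^ (n - 2) * (h ^ n - 2 * h * l) ∧
    Ideal.span {pderiv 0 V, pderiv 1 V} = Ideal.span {h ^ n - 2 * h * l, l ^ 2} := by
  intro h l V
  have hd1 : pderiv 1 V = -(h ^ n - 2 * h * l) := by
    simp only [V, h, l, map_add, map_neg, Derivation.leibniz, pderiv_pow, pderiv_X,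
      pderiv_C, Pi.single_eq_same, Pi.single_eq_of_ne (by decide : (0 : Fin 2) ≠ 1),
      smul_eq_mul, mul_zero, zero_mul, smul_zero, add_zero, zero_add, mul_one]
    ring
  have hd0 : pderiv 0 V = l ^ 2 + C ((n : ℚ) / 2) * h ^ (n - 2) * (h ^ n - 2 * h * l) := by
    obtain ⟨k, rfl⟩ : ∃ k, n = k + 2 := ⟨n - 2, by omega⟩
    simp [V, h, l, pderiv_pow, pderiv_X]
    rw [show 2 * (k + 2) - 1 = 2 * k + 3 by omega, show 2 * k + 3 - 1 = 2 * k + 2 by omega]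
    have e1 : ((k : MvPolynomial (Fin 2) ℚ) + 2) = C (((k : ℚ) + 2) / 2) * 2 := by
      rw [show (2 : MvPolynomial (Fin 2) ℚ) = C 2 from (map_ofNat C 2).symm, ← C_mul,
        div_mul_cancel₀ _ (two_ne_zero)]
      simp
    have e2 : (2 * ((k : MvPolynomial (Fin 2) ℚ) + 2) - 1)
        = C (2 * ((k : ℚ) + 2) - 1) := by
      simp only [map_sub, map_mul, map_add, map_one, map_ofNat, map_natCast]
    have hc : ((k : ℚ) + 2) / (2 * (2 * ((k : ℚ) + 2) - 1)) * (2 * ((k : ℚ) + 2) - 1)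
        = ((k : ℚ) + 2) / 2 := by
      have hne : (2 * ((k : ℚ) + 2) - 1) ≠ 0 := by
        have : (0:ℚ) ≤ k := Nat.cast_nonneg k
        nlinarith
      field_simp
    rw [e2, e1]; simp only [← mul_assoc, ← C_mul]; rw [hc]
    ring
  refine ⟨hd1, hd0, ?_⟩
  rw [hd0, hd1]
  refine le_antisymm (Ideal.span_le.2 ?_) (Ideal.span_le.2 ?_)
  · rintro x hx
    simp only [Set.mem_insert_iff, Set.mem_singleton_iff] at hx
    rcases hx with rfl | rfl
    · exact Ideal.mem_span_pair.2 ⟨C ((n : ℚ) / 2) * h ^ (n - 2), 1, by ring⟩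
    · exact Ideal.mem_span_pair.2 ⟨-1, 0, by ring⟩
  · rintro x hx
    simp only [Set.mem_insert_iff, Set.mem_singleton_iff] at hx
    rcases hx with rfl | rfl
    · exact Ideal.mem_span_pair.2 ⟨0, -1, by ring⟩
    · exact Ideal.mem_span_pair.2 ⟨1, C ((n : ℚ) / 2) * h ^ (n - 2), by ring⟩
end

section
/- For n even, in the polynomial ring ℚ[h, l] with potential V(h,l) = -h^n l + h l^2 + ((n-1)/(2(2n-1))) h^{2n-1}, one has ∂V/∂l = -(h^n - 2hl) and ∂V/∂h = l^2 - h^{n-1} l + ((n-1)/2) h^{n-2}(h^n - 2hl); consequently the Jacobi ideal of V equals the ideal (h^n - 2hl, l^2 - h^{n-1} l). -/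
open MvPolynomial

/-- for even `n`, the potential `V = -hⁿl + hl² + ((n-1)/(2(2n-1)))h^{2n-1}`
in ℚ[h,l] (with `h = X 0`, `l = X 1`) satisfies
`∂V/∂l = -(hⁿ - 2hl)` and `∂V/∂h = l² - h^{n-1}l + ((n-1)/2)h^{n-2}(hⁿ - 2hl)`,
and its Jacobi ideal equals `(hⁿ - 2hl, l² - h^{n-1}l)`. -/
theorem quadric_potential_even (n : ℕ) (hn : 2 ≤ n) (heven : Even n) :
    let h : MvPolynomial (Fin 2) ℚ := X 0
    let l : MvPolynomial (Fin 2) ℚ := X 1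
    let V : MvPolynomial (Fin 2) ℚ :=
      -(h ^ n * l) + h * l ^ 2 + C (((n : ℚ) - 1) / (2 * (2 * n - 1))) * h ^ (2 * n - 1)
    pderiv 1 V = -(h ^ n - 2 * h * l) ∧
    pderiv 0 V = l ^ 2 - h ^ (n - 1) * l
        + C (((n : ℚ) - 1) / 2) * h ^ (n - 2) * (h ^ n - 2 * h * l) ∧
    Ideal.span {pderiv 0 V, pderiv 1 V} =
      Ideal.span {h ^ n - 2 * h * l, l ^ 2 - h ^ (n - 1) * l} := by
  obtain ⟨m, rfl⟩ : ∃ m, n = m + 2 := ⟨n - 2, by omega⟩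
  intro h l V
  have e1 : m + 2 - 1 = m + 1 := by omega
  have e2 : m + 2 - 2 = m := by omega
  have e3 : 2 * (m + 2) - 1 = 2 * m + 3 := by omega
  have castC : ∀ k : ℕ, ((k : MvPolynomial (Fin 2) ℚ)) = C (k : ℚ) :=
    fun k => (map_natCast (C : ℚ →+* MvPolynomial (Fin 2) ℚ) k).symm
  have hd1 : pderiv 1 V = -(h ^ (m+2) - 2 * h * l) := by
    simp only [V, h, l, map_add, map_neg, pderiv_mul, pderiv_pow, pderiv_C,
      pderiv_X_self, pderiv_X_of_ne (by decide : (0:Fin 2) ≠ 1),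
      pderiv_X_of_ne (by decide : (1:Fin 2) ≠ 0)]
    ring
  have hd0 : pderiv 0 V = l ^ 2 - h ^ (m + 2 - 1) * l
      + C (((m+2 : ℕ) - 1 : ℚ) / 2) * h ^ (m + 2 - 2) * (h ^ (m+2) - 2 * h * l) := by
    simp only [V, h, l, e1, e2, e3, map_add, map_neg, pderiv_mul, pderiv_pow, pderiv_C,
      pderiv_X_self, pderiv_X_of_ne (by decide : (0:Fin 2) ≠ 1),
      pderiv_X_of_ne (by decide : (1:Fin 2) ≠ 0), smul_eq_mul, nsmul_eq_mul,
      castC, ← C_mul]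
    have c1 : (((m:ℚ) + 2) - 1) / (2 * (2 * ((m:ℚ)+2) - 1)) * ((2*m+3 : ℕ) : ℚ)
        = (((m:ℚ)+2) - 1) / 2 := by
      have : (2 * ((m:ℚ)+2) - 1) = ((2*m+3 : ℕ) : ℚ) := by push_cast; ring
      rw [this]
      have h3 : ((2*m+3 : ℕ) : ℚ) ≠ 0 := by positivity
      field_simp
    push_cast
    push_cast at c1
    have key : (C ((↑m + 2 - 1) / (2 * (2 * ((m:ℚ) + 2) - 1))) : MvPolynomial (Fin 2) ℚ)
        * C (2 * (m:ℚ) + 3) = C (((m:ℚ) + 2 - 1) / 2) := by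
      rw [← C_mul, c1]
    have key2 : (C ((m:ℚ) + 2) : MvPolynomial (Fin 2) ℚ)
        = 1 + 2 * C (((m:ℚ) + 2 - 1) / 2) := by
      have e : ((m:ℚ) + 2) = 1 + 2 * (((m:ℚ) + 2 - 1) / 2) := by ring
      conv_lhs => rw [e]
      rw [map_add, map_mul, map_one, map_ofNat]
    linear_combination (X 0 ^ (2*m+2) : MvPolynomial (Fin 2) ℚ) * key
      - (X 0 ^ (m+1) * X 1 : MvPolynomial (Fin 2) ℚ) * key2
  refine ⟨hd1, hd0, ?_⟩
  rw [hd0, hd1, e1, e2]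
  set f : MvPolynomial (Fin 2) ℚ := h ^ (m+2) - 2 * h * l with hf
  set g : MvPolynomial (Fin 2) ℚ := l ^ 2 - h ^ (m+1) * l with hg
  set c : MvPolynomial (Fin 2) ℚ := C ((((m+2 : ℕ) : ℚ) - 1) / 2) with hc
  refine le_antisymm (Ideal.span_le.2 ?_) (Ideal.span_le.2 ?_)
  · rintro p hp
    simp only [Set.mem_insert_iff, Set.mem_singleton_iff] at hp
    rcases hp with rfl | rfl <;>
      rw [SetLike.mem_coe, Ideal.mem_span_pair]
    · exact ⟨c * h ^ m, 1, by ring⟩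
    · exact ⟨-1, 0, by ring⟩
  · rintro p hp
    simp only [Set.mem_insert_iff, Set.mem_singleton_iff] at hp
    rcases hp with rfl | rfl <;>
      rw [SetLike.mem_coe, Ideal.mem_span_pair]
    · exact ⟨0, -1, by ring⟩
    · exact ⟨1, c * h ^ m, by ring⟩
end

section
/- In ℚ[y_1, y_4], let r_9 = 2y_1^9 + 3y_1y_4^2 - 6y_1^5y_4 and r_{12} = y_4^3 - 6y_1^4y_4^2 + y_1^{12}, and let V = 2y_1^9y_4 + y_1y_4^3 - 3y_1^5y_4^2 - (5/13)y_1^{13}. Then ∂V/∂y_4 = r_9 and ∂V/∂y_1 = r_{12} - 3y_1^3 r_9; in particular the Jacobi ideal of V equals the ideal (r_9, r_{12}). -/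
open MvPolynomial

/-- potential for `H*(E₆/(Spin(10)×SO(2)), ℚ) = ℚ[y₁,y₄]/(r₉, r₁₂)`.
Here `y₁ = X 0`, `y₄ = X 1`. -/
theorem E6_potential :
    let y1 : MvPolynomial (Fin 2) ℚ := X 0
    let y4 : MvPolynomial (Fin 2) ℚ := X 1
    let r9 : MvPolynomial (Fin 2) ℚ := 2 * y1 ^ 9 + 3 * y1 * y4 ^ 2 - 6 * y1 ^ 5 * y4
    let r12 : MvPolynomial (Fin 2) ℚ := y4 ^ 3 - 6 * y1 ^ 4 * y4 ^ 2 + y1 ^ 12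
    let V : MvPolynomial (Fin 2) ℚ :=
      2 * y1 ^ 9 * y4 + y1 * y4 ^ 3 - 3 * y1 ^ 5 * y4 ^ 2 - C (5/13 : ℚ) * y1 ^ 13
    pderiv 1 V = r9 ∧
    pderiv 0 V = r12 - 3 * y1 ^ 3 * r9 ∧
    Ideal.span {pderiv 0 V, pderiv 1 V} = Ideal.span {r9, r12} := by
  intro y1 y4 r9 r12 V
  have c2 : ∀ i : Fin 2, pderiv i (2 : MvPolynomial (Fin 2) ℚ) = 0 := by
    intro i; rw [← map_ofNat (C : ℚ →+* MvPolynomial (Fin 2) ℚ) 2, pderiv_C]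
  have c3 : ∀ i : Fin 2, pderiv i (3 : MvPolynomial (Fin 2) ℚ) = 0 := by
    intro i; rw [← map_ofNat (C : ℚ →+* MvPolynomial (Fin 2) ℚ) 3, pderiv_C]
  have h1 : pderiv 1 V = r9 := by
    simp only [V, r9, y1, y4, map_sub, map_add, Derivation.leibniz, Derivation.leibniz_pow,
      pderiv_X_self, pderiv_X_of_ne (by decide : (0 : Fin 2) ≠ 1), pderiv_C, c2, c3, smul_eq_mul]
    ring
  have hc : (C (5/13 : ℚ) : MvPolynomial (Fin 2) ℚ) * 13 = 5 := by
    rw [← map_ofNat (C : ℚ →+* MvPolynomial (Fin 2) ℚ) 13,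
      ← map_ofNat (C : ℚ →+* MvPolynomial (Fin 2) ℚ) 5, ← map_mul]
    norm_num
  have h0 : pderiv 0 V = r12 - 3 * y1 ^ 3 * r9 := by
    simp only [V, r9, r12, y1, y4, map_sub, map_add, Derivation.leibniz, Derivation.leibniz_pow,
      pderiv_X_self, pderiv_X_of_ne (by decide : (1 : Fin 2) ≠ 0), pderiv_C, c2, c3, smul_eq_mul]
    linear_combination (-(X 0 : MvPolynomial (Fin 2) ℚ) ^ 12) * hc
  refine ⟨h1, h0, ?_⟩
  rw [h0, h1]
  apply le_antisymm <;> rw [Ideal.span_le] <;> intro p hp <;>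
    rcases hp with rfl | rfl
  · have hr9 : r9 ∈ Ideal.span {r9, r12} :=
      Ideal.subset_span (Set.mem_insert _ _)
    have hr12 : r12 ∈ Ideal.span {r9, r12} :=
      Ideal.subset_span (Set.mem_insert_of_mem _ rfl)
    exact sub_mem hr12 (Ideal.mul_mem_left _ _ hr9)
  · exact Ideal.subset_span (Set.mem_insert _ _)
  · have ha : r12 - 3 * y1 ^ 3 * r9 ∈ Ideal.span {r12 - 3 * y1 ^ 3 * r9, r9} :=
      Ideal.subset_span (Set.mem_insert _ _)
    have hb : r9 ∈ Ideal.span {r12 - 3 * y1 ^ 3 * r9, r9} :=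
      Ideal.subset_span (Set.mem_insert_of_mem _ rfl)
    exact Ideal.subset_span (Set.mem_insert_of_mem _ rfl)
  · have ha : r12 - 3 * y1 ^ 3 * r9 ∈ Ideal.span {r12 - 3 * y1 ^ 3 * r9, r9} :=
      Ideal.subset_span (Set.mem_insert _ _)
    have hb : r9 ∈ Ideal.span {r12 - 3 * y1 ^ 3 * r9, r9} :=
      Ideal.subset_span (Set.mem_insert_of_mem _ rfl)
    have := add_mem ha (Ideal.mul_mem_left _ (3 * y1 ^ 3) hb)
    simpa using this
end

section
/- In ℚ[y_1, y_5, y_9], let r_{10} = y_5^2 - 2y_1y_9, r_{14} = 2y_5y_9 - 9y_1^4y_5^2 + 6y_1^9y_5 - y_1^{14}, r_{18} = y_9^2 + 10y_1^3y_5^3 - 9y_1^8y_5^2 + 2y_1^{13}y_5, and let V = -y_5^2y_9 + y_1y_9^2 + 3y_1^4y_5^3 - 3y_1^9y_5^2 + y_1^{14}y_5 - (2/19)y_1^{19}. Then ∂V/∂y_9 = -r_{10}, ∂V/∂y_5 = -r_{14}, and ∂V/∂y_1 = r_{18} + 2y_1^3y_5 r_{10} + 2y_1^4 r_{14}; in particular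 the Jacobi ideal of V equals (r_{10}, r_{14}, r_{18}). -/
open MvPolynomial

/-- potential for `H*(E₇/(E₆×SO(2)), ℚ) = ℚ[y₁,y₅,y₉]/(r₁₀, r₁₄, r₁₈)`.
Here `y₁ = X 0`, `y₅ = X 1`, `y₉ = X 2`. -/
theorem E7_potential :
    let y1 : MvPolynomial (Fin 3) ℚ := X 0
    let y5 : MvPolynomial (Fin 3) ℚ := X 1
    let y9 : MvPolynomial (Fin 3) ℚ := X 2
    let r10 : MvPolynomial (Fin 3) ℚ := y5 ^ 2 - 2 * y1 * y9
    let r14 : MvPolynomial (Fin 3) ℚ :=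
      2 * y5 * y9 - 9 * y1 ^ 4 * y5 ^ 2 + 6 * y1 ^ 9 * y5 - y1 ^ 14
    let r18 : MvPolynomial (Fin 3) ℚ :=
      y9 ^ 2 + 10 * y1 ^ 3 * y5 ^ 3 - 9 * y1 ^ 8 * y5 ^ 2 + 2 * y1 ^ 13 * y5
    let V : MvPolynomial (Fin 3) ℚ :=
      -(y5 ^ 2 * y9) + y1 * y9 ^ 2 + 3 * y1 ^ 4 * y5 ^ 3 - 3 * y1 ^ 9 * y5 ^ 2
        + y1 ^ 14 * y5 - C (2/19 : ℚ) * y1 ^ 19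
    pderiv 2 V = -r10 ∧
    pderiv 1 V = -r14 ∧
    pderiv 0 V = r18 + 2 * y1 ^ 3 * y5 * r10 + 2 * y1 ^ 4 * r14 ∧
    Ideal.span {pderiv 0 V, pderiv 1 V, pderiv 2 V} = Ideal.span {r10, r14, r18} := by
  intro y1 y5 y9 r10 r14 r18 V
  have hC3 : ∀ i : Fin 3, pderiv i (3 : MvPolynomial (Fin 3) ℚ) = 0 := fun i => by
    rw [← map_ofNat (C : ℚ →+* MvPolynomial (Fin 3) ℚ) 3, pderiv_C]
  have hC : (C (2/19 : ℚ) : MvPolynomial (Fin 3) ℚ) * 19 = 2 := by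
    rw [← map_ofNat (C : ℚ →+* MvPolynomial (Fin 3) ℚ) 19, ← C_mul,
      ← map_ofNat (C : ℚ →+* MvPolynomial (Fin 3) ℚ) 2]; norm_num
  have h2 : pderiv 2 V = -r10 := by
    simp [V, r10, y1, y5, y9, Derivation.leibniz_pow, pderiv_X, hC3, Pi.single_apply]
    try ring
    try linear_combination (X 0 : MvPolynomial (Fin 3) ℚ) ^ 18 * hC
    try linear_combination (-(X 0 : MvPolynomial (Fin 3) ℚ) ^ 18) * hC
  have h1 : pderiv 1 V = -r14 := by
    simp [V, r14, y1, y5, y9, Derivation.leibniz_pow, pderiv_X, hC3, Pi.single_apply]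
    try ring
    try linear_combination (X 0 : MvPolynomial (Fin 3) ℚ) ^ 18 * hC
    try linear_combination (-(X 0 : MvPolynomial (Fin 3) ℚ) ^ 18) * hC
  have h0 : pderiv 0 V = r18 + 2 * y1 ^ 3 * y5 * r10 + 2 * y1 ^ 4 * r14 := by
    simp [V, r18, r10, r14, y1, y5, y9, Derivation.leibniz_pow, pderiv_X, hC3,
      Pi.single_apply]
    try ring
    try linear_combination (X 0 : MvPolynomial (Fin 3) ℚ) ^ 18 * hC
    try linear_combination (-(X 0 : MvPolynomial (Fin 3) ℚ) ^ 18) * hC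
  refine ⟨h2, h1, h0, ?_⟩
  rw [h0, h1, h2]
  apply le_antisymm <;> rw [Ideal.span_le] <;> intro x hx <;>
    simp only [Set.mem_insert_iff, Set.mem_singleton_iff] at hx
  · rcases hx with rfl | rfl | rfl
    · exact add_mem (add_mem (Ideal.subset_span (by simp))
        (Ideal.mul_mem_left _ _ (Ideal.subset_span (by simp))))
        (Ideal.mul_mem_left _ _ (Ideal.subset_span (by simp)))
    · exact neg_mem (Ideal.subset_span (by simp))
    · exact neg_mem (Ideal.subset_span (by simp))
  · rcases hx with rfl | rfl | rfl
    · exact neg_mem_iff.mp (Ideal.subset_span (show -r10 ∈ _ by simp))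
    · exact neg_mem_iff.mp (Ideal.subset_span (show -r14 ∈ _ by simp))
    · have hA : (r18 + 2 * y1 ^ 3 * y5 * r10 + 2 * y1 ^ 4 * r14) ∈
          Ideal.span {r18 + 2 * y1 ^ 3 * y5 * r10 + 2 * y1 ^ 4 * r14, -r14, -r10} :=
        Ideal.subset_span (by simp)
      have h10 : r10 ∈
          Ideal.span {r18 + 2 * y1 ^ 3 * y5 * r10 + 2 * y1 ^ 4 * r14, -r14, -r10} :=
        neg_mem_iff.mp (Ideal.subset_span (by simp))
      have h14 : r14 ∈
          Ideal.span {r18 + 2 * y1 ^ 3 * y5 * r10 + 2 * y1 ^ 4 * r14, -r14, -r10} :=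
        neg_mem_iff.mp (Ideal.subset_span (by simp))
      have key := sub_mem (sub_mem hA (Ideal.mul_mem_left _ (2 * y1 ^ 3 * y5) h10))
        (Ideal.mul_mem_left _ (2 * y1 ^ 4) h14)
      have e : (r18 + 2 * y1 ^ 3 * y5 * r10 + 2 * y1 ^ 4 * r14)
          - 2 * y1 ^ 3 * y5 * r10 - 2 * y1 ^ 4 * r14 = r18 := by ring
      rwa [e] at key
end

section
/- Let y_1, ..., y_n be pairwise distinct complex numbers and f a symmetric polynomial in k variables with deg f < k(n-k). Then Σ over all k-element subsets {i_1,...,i_k} of {1,...,n} of f(y_{i_1},...,y_{i_k}) / ∏_{i ∈ {i_1,...,i_k}, j ∉ {i_1,...,i_k}} (y_i - y_j) equals 0. -/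
set_option maxRecDepth 10000
open MvPolynomial Finset
open MvPolynomial Finset

-- sum of a finset of naturals is at least 0+1+...+(card-1)
lemma sum_ge_of_card (s : Finset ℕ) : ∑ i ∈ Finset.range s.card, i ≤ ∑ x ∈ s, x := by
  induction s using Finset.strongInduction with
  | _ s ih =>
    rcases s.eq_empty_or_nonempty with rfl | hs
    · simp
    · have hmax := s.max'_mem hs
      have hcard : (s.erase (s.max' hs)).card = s.card - 1 := by
        rw [Finset.card_erase_of_mem hmax]
      have h1 : s.card - 1 ≤ s.max' hs := by
        have : s ⊆ Finset.range (s.max' hs + 1) := by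
          intro x hx
          simp [Nat.lt_succ_iff, Finset.le_max' s x hx]
        have := Finset.card_le_card this
        simp [Finset.card_range] at this
        omega
      have ih' := ih _ (Finset.erase_ssubset hmax)
      rw [hcard] at ih'
      have hins : ∑ x ∈ s, x = s.max' hs + ∑ x ∈ s.erase (s.max' hs), x :=
        (Finset.add_sum_erase s id hmax).symm
      have hr : ∑ i ∈ Finset.range s.card, i
          = (s.card - 1) + ∑ i ∈ Finset.range (s.card - 1), i := by
        have : s.card = (s.card - 1) + 1 := by
          have := Finset.card_pos.mpr hs; omega
        conv_lhs => rw [this, Finset.sum_range_succ]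
        omega
      omega

lemma sum_inj_ge {n : ℕ} (α : Fin n → ℕ) (hα : Function.Injective α) :
    ∑ i ∈ Finset.range n, i ≤ ∑ i, α i := by
  have himg : (Finset.univ.image α).card = n := by
    rw [Finset.card_image_of_injective _ hα, Finset.card_univ, Fintype.card_fin]
  have := sum_ge_of_card (Finset.univ.image α)
  rw [himg, Finset.sum_image (fun a _ b _ h => hα h)] at this
  exact this

lemma alternating_zero {n : ℕ} (P : MvPolynomial (Fin n) ℂ)
    (halt : ∀ i j : Fin n, i ≠ j → rename (Equiv.swap i j) P = -P)
    (hdeg : P.totalDegree < ∑ i ∈ Finset.range n, i) : P = 0 := by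
  rw [MvPolynomial.eq_zero_iff]
  intro α
  by_cases hinj : Function.Injective (fun i => α i)
  · by_contra hc
    have hmem : α ∈ P.support := MvPolynomial.mem_support_iff.mpr hc
    have h1 : (α.sum fun _ e => e) ≤ P.totalDegree := MvPolynomial.le_totalDegree hmem
    have h2 : (α.sum fun _ e => e) = ∑ i, α i := Finsupp.sum_fintype _ _ (fun _ => rfl)
    have h3 := sum_inj_ge (fun i => α i) hinj
    omega
  · rw [Function.not_injective_iff] at hinj
    obtain ⟨i, j, hij, hne⟩ := hinj
    have hmap : Finsupp.mapDomain (⇑(Equiv.swap i j)) α = α := by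
      ext x
      have : x = Equiv.swap i j (Equiv.swap i j x) := by simp
      conv_lhs => rw [this, Finsupp.mapDomain_apply (Equiv.injective _)]
      rcases eq_or_ne x i with rfl | hxi
      · simpa using hij.symm
      · rcases eq_or_ne x j with rfl | hxj
        · simpa using hij
        · rw [Equiv.swap_apply_of_ne_of_ne hxi hxj]

    have hco : coeff α (rename (⇑(Equiv.swap i j)) P) = coeff α P := by
      conv_lhs => rw [← hmap]
      exact MvPolynomial.coeff_rename_mapDomain _ (Equiv.injective _) _ _
    rw [halt i j hne] at hco
    simp only [coeff_neg] at hco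
    have h2 : (2 : ℂ) * coeff α P = 0 := by linear_combination -hco
    simpa using h2
open MvPolynomial Finset

def pairs (j : ℕ) : Finset (Fin j × Fin j) := Finset.univ.filter (fun p => p.1 < p.2)

lemma prod_pairs {M : Type*} [CommMonoid M] (j : ℕ) (g : Fin j → Fin j → M) :
    ∏ p ∈ pairs j, g p.1 p.2 = ∏ i, ∏ l ∈ Finset.Ioi i, g i l := by
  rw [Finset.prod_sigma']
  apply Finset.prod_bij (fun (p : Fin j × Fin j) _ => (⟨p.1, p.2⟩ : Σ _ : Fin j, Fin j))
  · rintro ⟨a, b⟩ hab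
    simp only [pairs, Finset.mem_filter, Finset.mem_univ, true_and] at hab
    simp [Finset.mem_sigma, Finset.mem_Ioi, hab]
  · rintro ⟨a, b⟩ ha ⟨c, d⟩ hc h
    have h1 : a = c := congrArg Sigma.fst h
    subst h1
    have h2 : b = d := by simpa using congrArg Sigma.snd h
    subst h2; rfl
  · rintro ⟨a, b⟩ hab
    simp only [Finset.mem_sigma, Finset.mem_univ, true_and, Finset.mem_Ioi] at hab
    exact ⟨(a, b), by simp [pairs, hab], rfl⟩
  · intros; rfl

lemma card_pairs (j : ℕ) : (pairs j).card = ∑ i ∈ Finset.range j, i := by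
  classical
  have h1 : (pairs j).card = ((Finset.univ : Finset (Fin j)).sigma fun i => Finset.Ioi i).card := by
    rw [Finset.card_sigma]
    rw [Finset.card_eq_sum_card_fiberwise
      (f := fun p : Fin j × Fin j => p.1) (t := Finset.univ) (fun _ _ => Finset.mem_univ _)]
    apply Finset.sum_congr rfl
    intro i _
    apply Finset.card_bij (fun p _ => p.2)
    · rintro ⟨a, b⟩ hab
      simp only [pairs, Finset.mem_filter, Finset.mem_univ, true_and] at hab
      obtain ⟨h1, h2⟩ := hab
      subst h2
      simpa using h1
    · rintro ⟨a, b⟩ ha ⟨c, d⟩ hc h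
      simp only [pairs, Finset.mem_filter] at ha hc
      simp only [] at h
      obtain ⟨-, rfl⟩ := ha; obtain ⟨-, rfl⟩ := hc
      simp [h]
    · intro b hb
      exact ⟨(i, b), by simp [pairs, Finset.mem_Ioi.mp hb], rfl⟩
  rw [h1, Finset.card_sigma]
  simp only [Fin.card_Ioi]
  rw [Fin.sum_univ_eq_sum_range (fun i => j - 1 - i)]
  exact Finset.sum_range_reflect (fun i => i) j

lemma prod_pairs_split {M : Type*} [CommMonoid M] {n k m : ℕ} (hkm : k + m = n)
    (g : Fin n → Fin n → M) :
    ∏ p ∈ pairs n, g p.1 p.2 =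
      ((∏ p ∈ pairs k, g (p.1.castLE (by omega)) (p.2.castLE (by omega))) *
       (∏ p ∈ pairs m, g ⟨k + p.1.1, by omega⟩ ⟨k + p.2.1, by omega⟩)) *
      ∏ a : Fin k, ∏ b : Fin m, g (a.castLE (by omega)) ⟨k + b.1, by omega⟩ := by
  classical
  have memP : ∀ (j : ℕ) (p : Fin j × Fin j), p ∈ pairs j ↔ (p.1 : ℕ) < (p.2 : ℕ) := by
    intro j p
    simp only [pairs, Finset.mem_filter, Finset.mem_univ, true_and, Fin.lt_def]
  have memlow : ∀ p : Fin n × Fin n, p ∈ (pairs n).filter (fun p => (p.2 : ℕ) < k) ↔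
      ((p.1 : ℕ) < (p.2 : ℕ) ∧ (p.2 : ℕ) < k) := by
    intro p
    simp only [Finset.mem_filter, pairs, Finset.mem_univ, true_and, Fin.lt_def]
  have memhigh : ∀ p : Fin n × Fin n,
      p ∈ ((pairs n).filter (fun p => ¬ (p.2 : ℕ) < k)).filter (fun p => ¬ (p.1 : ℕ) < k) ↔
      ((p.1 : ℕ) < (p.2 : ℕ) ∧ k ≤ (p.2 : ℕ) ∧ k ≤ (p.1 : ℕ)) := by
    intro p
    simp only [Finset.mem_filter, pairs, Finset.mem_univ, true_and, Fin.lt_def]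
    omega
  have memcross : ∀ p : Fin n × Fin n,
      p ∈ ((pairs n).filter (fun p => ¬ (p.2 : ℕ) < k)).filter (fun p => ¬¬ (p.1 : ℕ) < k) ↔
      ((p.1 : ℕ) < k ∧ k ≤ (p.2 : ℕ)) := by
    intro p
    simp only [Finset.mem_filter, pairs, Finset.mem_univ, true_and, Fin.lt_def]
    omega
  rw [← Finset.prod_filter_mul_prod_filter_not (pairs n) (fun p => (p.2 : ℕ) < k)]
  rw [← Finset.prod_filter_mul_prod_filter_not
    ((pairs n).filter fun p => ¬ (p.2 : ℕ) < k) (fun p => ¬ (p.1 : ℕ) < k)]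
  rw [mul_assoc]
  congr 1
  · -- low block
    symm
    apply Finset.prod_bij (fun (p : Fin k × Fin k) _ =>
      ((p.1.castLE (by omega) : Fin n), (p.2.castLE (by omega) : Fin n)))
    · intro p hp
      rw [memP] at hp
      rw [memlow]
      exact ⟨by simpa using hp, by simpa using p.2.2⟩
    · intro p hp q hq h
      have h1 := congrArg (fun r : Fin n × Fin n => (r.1 : ℕ)) h
      have h2 := congrArg (fun r : Fin n × Fin n => (r.2 : ℕ)) h
      simp only [Fin.coe_castLE] at h1 h2
      exact Prod.ext (Fin.ext h1) (Fin.ext h2)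
    · intro p hp
      rw [memlow] at hp
      refine ⟨(⟨p.1.1, by omega⟩, ⟨p.2.1, by omega⟩), ?_, ?_⟩
      · rw [memP]; exact hp.1
      · exact Prod.ext (Fin.ext rfl) (Fin.ext rfl)
    · intros; rfl
  congr 1
  · -- high block
    symm
    apply Finset.prod_bij (fun (p : Fin m × Fin m) _ =>
      ((⟨k + p.1.1, by omega⟩ : Fin n), (⟨k + p.2.1, by omega⟩ : Fin n)))
    · intro p hp
      rw [memP] at hp
      rw [memhigh]
      simp only []
      omega
    · intro p hp q hq h
      have h1 := congrArg (fun r : Fin n × Fin n => (r.1 : ℕ)) h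
      have h2 := congrArg (fun r : Fin n × Fin n => (r.2 : ℕ)) h
      simp only [] at h1 h2
      exact Prod.ext (Fin.ext (by omega)) (Fin.ext (by omega))
    · intro p hp
      rw [memhigh] at hp
      refine ⟨(⟨p.1.1 - k, by omega⟩, ⟨p.2.1 - k, by omega⟩), ?_, ?_⟩
      · rw [memP]; simp only []; omega
      · exact Prod.ext (Fin.ext (by simp only []; omega)) (Fin.ext (by simp only []; omega))
    · intros; rfl
  · -- cross block
    rw [← Finset.prod_product']
    symm
    apply Finset.prod_bij (fun (p : Fin k × Fin m) _ =>
      ((p.1.castLE (by omega) : Fin n), (⟨k + p.2.1, by omega⟩ : Fin n)))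
    · intro p hp
      rw [memcross]
      simp only [Fin.coe_castLE]
      exact ⟨p.1.2, by omega⟩
    · intro p hp q hq h
      have h1 := congrArg (fun r : Fin n × Fin n => (r.1 : ℕ)) h
      have h2 := congrArg (fun r : Fin n × Fin n => (r.2 : ℕ)) h
      simp only [Fin.coe_castLE] at h1 h2
      exact Prod.ext (Fin.ext (by omega)) (Fin.ext (by omega))
    · intro p hp
      rw [memcross] at hp
      refine ⟨(⟨p.1.1, by omega⟩, ⟨p.2.1 - k, by omega⟩), Finset.mem_univ _, ?_⟩
      exact Prod.ext (Fin.ext rfl) (Fin.ext (by simp only []; omega))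
    · intros; rfl
def emb1 {n k : ℕ} (hk : k ≤ n) : Fin k → Fin n := fun a => Fin.castLE hk a

def emb2 {n k : ℕ} (hk : k ≤ n) : Fin (n - k) → Fin n :=
  fun b => ⟨k + b.1, by have := b.2; omega⟩

lemma emb1_injective {n k : ℕ} (hk : k ≤ n) : Function.Injective (emb1 hk) :=
  Fin.castLE_injective hk

lemma emb2_injective {n k : ℕ} (hk : k ≤ n) : Function.Injective (emb2 hk) := by
  intro a b hab
  have := congrArg Fin.val hab
  simp only [emb2] at this
  exact Fin.ext (by omega)

lemma prod_pairs_split' {M : Type*} [CommMonoid M] {n k : ℕ} (hk : k ≤ n)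
    (g : Fin n → Fin n → M) :
    ∏ p ∈ pairs n, g p.1 p.2 =
      ((∏ p ∈ pairs k, g (emb1 hk p.1) (emb1 hk p.2)) *
       (∏ p ∈ pairs (n - k), g (emb2 hk p.1) (emb2 hk p.2))) *
      ∏ a : Fin k, ∏ b : Fin (n - k), g (emb1 hk a) (emb2 hk b) :=
  prod_pairs_split (show k + (n - k) = n by omega) g

noncomputable def permB (n k : ℕ) (hk : k ≤ n) (f : MvPolynomial (Fin k) ℂ) :
    MvPolynomial (Fin n) ℂ :=
  rename (emb1 hk) f *
  (∏ p ∈ pairs k, (X (emb1 hk p.2) - X (emb1 hk p.1))) *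
  (∏ p ∈ pairs (n - k), (X (emb2 hk p.2) - X (emb2 hk p.1)))

noncomputable def permA (n k : ℕ) (hk : k ≤ n) (f : MvPolynomial (Fin k) ℂ) :
    MvPolynomial (Fin n) ℂ :=
  ∑ σ : Equiv.Perm (Fin n), ((Equiv.Perm.sign σ : ℤ) : ℂ) • rename (⇑σ) (permB n k hk f)

lemma permA_rename (n k : ℕ) (hk : k ≤ n) (f : MvPolynomial (Fin k) ℂ) (τ : Equiv.Perm (Fin n)) :
    rename (⇑τ) (permA n k hk f) = ((Equiv.Perm.sign τ : ℤ) : ℂ) • permA n k hk f := by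
  rw [permA, map_sum, Finset.smul_sum]
  rw [← Equiv.sum_comp (Equiv.mulLeft τ) (fun σ =>
    ((Equiv.Perm.sign τ : ℤ) : ℂ) • (((Equiv.Perm.sign σ : ℤ) : ℂ) • rename (⇑σ) (permB n k hk f)))]
  apply Finset.sum_congr rfl
  intro σ _
  rw [map_smul, rename_rename]
  have hc : ⇑τ ∘ ⇑σ = ⇑(Equiv.mulLeft τ σ) := rfl
  rw [hc, smul_smul]
  congr 1
  have h2 : Equiv.Perm.sign (Equiv.mulLeft τ σ) = Equiv.Perm.sign τ * Equiv.Perm.sign σ := by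
    simp
  rw [h2]
  rcases Int.units_eq_one_or (Equiv.Perm.sign τ) with h | h <;>
    rcases Int.units_eq_one_or (Equiv.Perm.sign σ) with h' | h' <;>
      simp [h, h']

lemma permA_zero (n k : ℕ) (hk : k ≤ n) (f : MvPolynomial (Fin k) ℂ)
    (hdeg : f.totalDegree < k * (n - k)) : permA n k hk f = 0 := by
  apply alternating_zero
  · intro i j hij
    rw [permA_rename, Equiv.Perm.sign_swap hij]
    simp
  · have hXX : ∀ a b : Fin n, (X a - X b : MvPolynomial (Fin n) ℂ).totalDegree ≤ 1 := by
      intro a b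
      refine le_trans (totalDegree_sub _ _) ?_
      simp [totalDegree_X]
    have hprod : ∀ (j : ℕ) (u v : Fin j × Fin j → Fin n),
        (∏ p ∈ pairs j, (X (u p) - X (v p) : MvPolynomial (Fin n) ℂ)).totalDegree ≤
          ∑ i ∈ Finset.range j, i := by
      intro j u v
      refine le_trans (totalDegree_finset_prod _ _) ?_
      rw [← card_pairs j, Finset.card_eq_sum_ones]
      exact Finset.sum_le_sum fun p _ => hXX _ _
    have hB : (permB n k hk f).totalDegree ≤
        f.totalDegree + ((∑ i ∈ Finset.range k, i) + ∑ i ∈ Finset.range (n - k), i) := by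
      rw [permB, mul_assoc]
      refine le_trans (totalDegree_mul _ _) (add_le_add (totalDegree_rename_le _ _) ?_)
      exact le_trans (totalDegree_mul _ _) (add_le_add (hprod _ _ _) (hprod _ _ _))
    have hA : (permA n k hk f).totalDegree ≤
        f.totalDegree + ((∑ i ∈ Finset.range k, i) + ∑ i ∈ Finset.range (n - k), i) := by
      rw [permA]
      refine le_trans (totalDegree_finset_sum _ _) (Finset.sup_le ?_)
      intro σ _
      exact le_trans (totalDegree_smul_le _ _) (le_trans (totalDegree_rename_le _ _) hB)
    refine lt_of_le_of_lt hA ?_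
    have h2 : ∀ j : ℕ, (∑ i ∈ Finset.range j, i) * 2 = j * (j - 1) :=
      Finset.sum_range_id_mul_two
    have e1 := h2 k; have e2 := h2 (n - k); have e3 := h2 n
    have key : n * (n - 1) = k * (k - 1) + (n - k) * (n - k - 1) + 2 * (k * (n - k)) := by
      have hkm : 0 < k * (n - k) := lt_of_le_of_lt (Nat.zero_le _) hdeg
      have h1 : 1 ≤ k := by by_contra h; simp [show k = 0 by omega] at hkm
      have h2 : 1 ≤ n - k := by by_contra h; simp [show n - k = 0 by omega] at hkm
      have h3 : k ≤ n := hk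
      have h4 : 1 ≤ n := by omega
      zify [h1, h2, h3, h4]
      ring
    linarith [hdeg, e1, e2, e3, key]


lemma exists_perm {n k : ℕ} (hk : k ≤ n) (S : Finset (Fin n)) (hS : S.card = k) :
    ∃ σ : Equiv.Perm (Fin n), ∀ a : Fin k, σ (emb1 hk a) = S.orderEmbOfFin hS a := by
  classical
  have hSc : Sᶜ.card = n - k := by
    rw [Finset.card_compl, hS]; simp
  let E1 : Fin n ≃ Fin (k + (n - k)) := finCongr (by omega)
  let E2 : Fin (k + (n - k)) ≃ Fin k ⊕ Fin (n - k) := finSumFinEquiv.symm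
  let E3 : (Fin k ⊕ Fin (n - k)) ≃ ({x // x ∈ S} ⊕ {x // x ∈ Sᶜ}) :=
    Equiv.sumCongr (S.orderIsoOfFin hS).toEquiv (Sᶜ.orderIsoOfFin hSc).toEquiv
  let E4 : {x // x ∈ Sᶜ} ≃ {x // ¬ x ∈ S} := Equiv.subtypeEquivRight (by simp)
  let E5 : ({x // x ∈ S} ⊕ {x // ¬ x ∈ S}) ≃ Fin n := Equiv.sumCompl (· ∈ S)
  refine ⟨(((E1.trans E2).trans E3).trans
    (Equiv.sumCongr (Equiv.refl _) E4)).trans E5, fun a => ?_⟩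
  have h1 : E1 (emb1 hk a) = Fin.castAdd (n - k) a := Fin.ext rfl
  have h2 : E2 (Fin.castAdd (n - k) a) = Sum.inl a := finSumFinEquiv_symm_apply_castAdd a
  simp only [Equiv.trans_apply, h1, h2, E3, Equiv.sumCongr_apply, Sum.map_inl]
  simp [E5, Equiv.sumCompl_apply_inl]


/-- for pairwise distinct `y₁,…,yₙ ∈ ℂ` and a symmetric polynomial
`f` in `k` variables with `deg f < k(n-k)`,
`∑_{S ⊆ {1,…,n}, |S| = k} f(y_S) / ∏_{i∈S, j∉S} (yᵢ - yⱼ) = 0`. -/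
theorem equivariant_pairing_vanishing (n k : ℕ) (hk : k ≤ n) (y : Fin n → ℂ)
    (hy : Function.Injective y) (f : MvPolynomial (Fin k) ℂ)
    (hf : f.IsSymmetric) (hdeg : f.totalDegree < k * (n - k)) :
    ∑ S ∈ (Finset.univ.powersetCard k).attach,
      MvPolynomial.eval
          (fun i => y (S.1.orderEmbOfFin (Finset.mem_powersetCard.mp S.2).2 i)) f /
        ∏ i ∈ S.1, ∏ j ∈ S.1ᶜ, (y i - y j) = 0 := by
  classical
  -- Vandermonde as pairs product
  have hvdmΔ : ∀ z : Fin n → ℂ,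
      ∏ p ∈ pairs n, (z p.2 - z p.1) = (Matrix.vandermonde z).det := by
    intro z
    rw [Matrix.det_vandermonde]
    exact prod_pairs n (fun i l => z l - z i)
  set Δy : ℂ := ∏ p ∈ pairs n, (y p.2 - y p.1) with hΔydef
  have hΔy : Δy ≠ 0 := by
    rw [hΔydef]
    rw [Finset.prod_ne_zero_iff]
    intro p hp
    simp only [pairs, Finset.mem_filter, Finset.mem_univ, true_and] at hp
    exact sub_ne_zero.mpr (fun hcon => (ne_of_lt hp) (hy hcon).symm)
  have hsign : ∀ σ : Equiv.Perm (Fin n),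
      ∏ p ∈ pairs n, (y (σ p.2) - y (σ p.1)) = ((Equiv.Perm.sign σ : ℤ) : ℂ) * Δy := by
    intro σ
    have h1 := hvdmΔ (fun i => y (σ i))
    have h2 : Matrix.vandermonde (fun i => y (σ i)) = fun i => Matrix.vandermonde y (σ i) := rfl
    have h2' : (fun i => Matrix.vandermonde y (σ i)) = (Matrix.vandermonde y).submatrix (⇑σ) id :=
      rfl
    rw [h1, h2, h2', Matrix.det_permute, hΔydef, hvdmΔ y]
  set Φ : Equiv.Perm (Fin n) → Finset (Fin n) :=
    (fun σ => Finset.image (fun a : Fin k => σ (emb1 hk a)) Finset.univ) with hΦdef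
  have hΦcard : ∀ σ, (Φ σ).card = k := by
    intro σ
    have hinj : Function.Injective (fun a : Fin k => σ (emb1 hk a)) :=
      fun a b hab => emb1_injective hk (σ.injective hab)
    rw [hΦdef]
    simp [Finset.card_image_of_injective _ hinj]
  set G : Finset (Fin n) → ℂ := (fun S =>
    if hS : S.card = k then
      (MvPolynomial.eval (fun i => y (S.orderEmbOfFin hS i)) f) * Δy /
        (∏ i ∈ S, ∏ j ∈ Sᶜ, (y j - y i))
    else 0) with hGdef
  have hDS : ∀ S : Finset (Fin n), (∏ i ∈ S, ∏ j ∈ Sᶜ, (y j - y i)) ≠ 0 := by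
    intro S
    rw [Finset.prod_ne_zero_iff]
    intro i hi
    rw [Finset.prod_ne_zero_iff]
    intro j hj
    refine sub_ne_zero.mpr (fun hcon => ?_)
    rw [Finset.mem_compl] at hj
    exact hj (by rw [hy hcon]; exact hi)
  -- key step: each summand of the antisymmetrization evaluates to G (Φ σ)
  have key : ∀ σ : Equiv.Perm (Fin n),
      ((Equiv.Perm.sign σ : ℤ) : ℂ) * MvPolynomial.eval y (rename (⇑σ) (permB n k hk f)) =
        G (Φ σ) := by
    intro σ
    have hScard := hΦcard σ
    set S := Φ σ with hSdef
    set F := MvPolynomial.eval (fun a : Fin k => y (σ (emb1 hk a))) f with hFdef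
    set P1 := ∏ p ∈ pairs k, (y (σ (emb1 hk p.2)) - y (σ (emb1 hk p.1))) with hP1
    set P2 := ∏ p ∈ pairs (n - k), (y (σ (emb2 hk p.2)) - y (σ (emb2 hk p.1))) with hP2
    set Cr := ∏ a : Fin k, ∏ b : Fin (n - k), (y (σ (emb2 hk b)) - y (σ (emb1 hk a))) with hCr
    have hmemS : ∀ a : Fin k, σ (emb1 hk a) ∈ S := by
      intro a
      rw [hSdef, hΦdef]
      exact Finset.mem_image_of_mem _ (Finset.mem_univ a)
    have heval : MvPolynomial.eval y (rename (⇑σ) (permB n k hk f)) = F * P1 * P2 := by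
      rw [permB, eval_rename, map_mul, map_mul, eval_rename]
      simp only [map_prod, map_sub, eval_X, Function.comp]
      rfl
    have hsplit : ((Equiv.Perm.sign σ : ℤ) : ℂ) * Δy = (P1 * P2) * Cr := by
      rw [← hsign σ]
      exact prod_pairs_split' hk (fun i j => y (σ j) - y (σ i))
    have hcross : Cr = ∏ i ∈ S, ∏ j ∈ Sᶜ, (y j - y i) := by
      rw [hCr]
      apply Finset.prod_bij (fun (a : Fin k) _ => σ (emb1 hk a))
      · intro a _
        exact hmemS a
      · intro a _ b _ hab
        exact emb1_injective hk (σ.injective hab)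
      · intro x hx
        rw [hSdef, hΦdef] at hx
        simp only [Finset.mem_image, Finset.mem_univ, true_and] at hx
        obtain ⟨a, ha⟩ := hx
        exact ⟨a, Finset.mem_univ a, ha⟩
      · intro a _
        apply Finset.prod_bij (fun (b : Fin (n - k)) _ => σ (emb2 hk b))
        · intro b _
          rw [Finset.mem_compl, hSdef, hΦdef]
          simp only [Finset.mem_image, Finset.mem_univ, true_and, not_exists]
          intro a' hcon
          have h1 := congrArg Fin.val (σ.injective hcon)
          have h2 : (emb1 hk a' : ℕ) = a'.1 := rfl
          have h3 : (emb2 hk b : ℕ) = k + b.1 := rfl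
          rw [h2, h3] at h1
          have := a'.2
          omega
        · intro b _ b' _ hbb
          exact emb2_injective hk (σ.injective hbb)
        · intro j hj
          rw [Finset.mem_compl, hSdef, hΦdef] at hj
          simp only [Finset.mem_image, Finset.mem_univ, true_and, not_exists] at hj
          have hxval : k ≤ (σ.symm j).1 := by
            by_contra hcon
            push_neg at hcon
            refine hj ⟨(σ.symm j).1, hcon⟩ ?_
            have hex : emb1 hk ⟨(σ.symm j).1, hcon⟩ = σ.symm j := Fin.ext rfl
            rw [hex]
            exact σ.apply_symm_apply j
          have hb2 : (σ.symm j).1 - k < n - k := by have := (σ.symm j).2; omega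
          refine ⟨⟨(σ.symm j).1 - k, hb2⟩, Finset.mem_univ _, ?_⟩
          have hxx : emb2 hk ⟨(σ.symm j).1 - k, hb2⟩ = σ.symm j := by
            apply Fin.ext
            show k + ((σ.symm j).1 - k) = (σ.symm j).1
            omega
          rw [hxx]
          exact σ.apply_symm_apply j
        · intro b _
          rfl
    have hsym : F = MvPolynomial.eval (fun i => y (S.orderEmbOfFin hScard i)) f := by
      have hu : Function.Bijective
          (fun a : Fin k => (⟨σ (emb1 hk a), hmemS a⟩ : {x // x ∈ S})) := by
        rw [Fintype.bijective_iff_injective_and_card]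
        constructor
        · intro a b hab
          exact emb1_injective hk (σ.injective (congrArg Subtype.val hab))
        · simp [Fintype.card_coe, hScard]
      set π : Equiv.Perm (Fin k) :=
        (Equiv.ofBijective _ hu).trans (S.orderIsoOfFin hScard).toEquiv.symm with hπ
      have hcomm : ∀ a : Fin k, σ (emb1 hk a) = S.orderEmbOfFin hScard (π a) := by
        intro a
        have h1 : (S.orderIsoOfFin hScard) (π a) = ⟨σ (emb1 hk a), hmemS a⟩ := by
          rw [hπ]
          simp only [Equiv.trans_apply]
          exact (S.orderIsoOfFin hScard).apply_symm_apply _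
        have h2 : (S.orderEmbOfFin hScard) (π a) = ((S.orderIsoOfFin hScard (π a)) : Fin n) :=
          (Finset.coe_orderIsoOfFin_apply S hScard (π a)).symm
        rw [h2, h1]
      have h3 : (fun a : Fin k => y (σ (emb1 hk a)))
          = (fun i => y (S.orderEmbOfFin hScard i)) ∘ ⇑π := by
        funext a
        simp only [Function.comp_apply]
        rw [hcomm a]
      rw [hFdef, h3, ← eval_rename, hf π]
    have hG : G S = MvPolynomial.eval (fun i => y (S.orderEmbOfFin hScard i)) f * Δy /
        (∏ i ∈ S, ∏ j ∈ Sᶜ, (y j - y i)) := by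
      rw [hGdef]
      simp only []
      rw [dif_pos hScard]
    have hCr0 : Cr ≠ 0 := by rw [hcross]; exact hDS S
    rw [heval, hG, ← hsym, ← hcross, eq_div_iff hCr0]
    have hs : ((Equiv.Perm.sign σ : ℤ) : ℂ) * ((Equiv.Perm.sign σ : ℤ) : ℂ) = 1 := by
      rcases Int.units_eq_one_or (Equiv.Perm.sign σ) with h | h <;> rw [h] <;> norm_num
    linear_combination (-(F * ((Equiv.Perm.sign σ : ℤ) : ℂ))) * hsplit + (F * Δy) * hs
  -- the antisymmetrization is zero
  have hsum0 : ∑ σ : Equiv.Perm (Fin n), G (Φ σ) = 0 := by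
    have h1 : ∑ σ : Equiv.Perm (Fin n), G (Φ σ) =
        MvPolynomial.eval y (permA n k hk f) := by
      rw [permA, map_sum]
      refine Finset.sum_congr rfl (fun σ _ => ?_)
      rw [← key σ, MvPolynomial.smul_eq_C_mul, map_mul, eval_C]
    rw [h1, permA_zero n k hk f hdeg]
    simp
  -- fiberwise summation
  have hmaps : ∀ σ : Equiv.Perm (Fin n), σ ∈ (Finset.univ : Finset (Equiv.Perm (Fin n))) →
      Φ σ ∈ Finset.univ.powersetCard k := by
    intro σ _
    rw [Finset.mem_powersetCard]
    exact ⟨Finset.subset_univ _, hΦcard σ⟩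
  have hfib := Finset.sum_fiberwise_of_maps_to' hmaps G
  -- the fibers all have the same cardinality
  have hΦperm : ∀ (S : Finset (Fin n)) (hS : S.card = k) (σ : Equiv.Perm (Fin n)),
      (∀ a : Fin k, σ (emb1 hk a) = S.orderEmbOfFin hS a) → Φ σ = S := by
    intro S hS σ hσ
    rw [hΦdef]
    simp only []
    have h1 : (fun a : Fin k => σ (emb1 hk a)) = fun a => S.orderEmbOfFin hS a :=
      funext hσ
    rw [h1]
    apply Finset.eq_of_subset_of_card_le
    · intro x hx
      rw [Finset.mem_image] at hx
      obtain ⟨a, -, rfl⟩ := hx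
      exact Finset.orderEmbOfFin_mem S hS a
    · rw [hS, Finset.card_image_of_injective _ (S.orderEmbOfFin hS).injective]
      simp
  have hcard_const : ∀ S ∈ Finset.univ.powersetCard k (α := Fin n),
      ∀ S' ∈ Finset.univ.powersetCard k (α := Fin n),
      (Finset.univ.filter (fun σ => Φ σ = S)).card =
        (Finset.univ.filter (fun σ => Φ σ = S')).card := by
    have hΦmul : ∀ τ ρ : Equiv.Perm (Fin n), Φ (τ * ρ) = Finset.image (⇑τ) (Φ ρ) := by
      intro τ ρ
      rw [hΦdef]
      simp only []
      rw [Finset.image_image]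
      rfl
    intro S hS S' hS'
    rw [Finset.mem_powersetCard] at hS hS'
    obtain ⟨σ₁, hσ₁⟩ := exists_perm hk S hS.2
    obtain ⟨σ₂, hσ₂⟩ := exists_perm hk S' hS'.2
    have hΦ₁ : Φ σ₁ = S := hΦperm S hS.2 σ₁ hσ₁
    have hΦ₂ : Φ σ₂ = S' := hΦperm S' hS'.2 σ₂ hσ₂
    set τ := σ₂ * σ₁⁻¹ with hτ
    have hτS : Finset.image (⇑τ) S = S' := by
      rw [← hΦ₁, ← hΦmul, hτ]
      rw [inv_mul_cancel_right]
      exact hΦ₂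
    have hτS' : Finset.image (⇑τ⁻¹) S' = S := by
      rw [← hτS, Finset.image_image]
      have : (⇑τ⁻¹ ∘ ⇑τ) = id := by
        funext x; simp
      rw [this, Finset.image_id]
    apply Finset.card_bij (fun ρ _ => τ * ρ)
    · intro ρ hρ
      rw [Finset.mem_filter] at hρ ⊢
      refine ⟨Finset.mem_univ _, ?_⟩
      rw [hΦmul, hρ.2, hτS]
    · intro ρ _ ρ' _ h
      exact mul_left_cancel h
    · intro ρ' hρ'
      rw [Finset.mem_filter] at hρ'
      refine ⟨τ⁻¹ * ρ', ?_, ?_⟩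
      · rw [Finset.mem_filter]
        refine ⟨Finset.mem_univ _, ?_⟩
        rw [hΦmul, hρ'.2, hτS']
      · rw [← mul_assoc]
        simp
  -- conclude ∑_{S} G S = 0
  have hGsum : ∑ S ∈ Finset.univ.powersetCard k (α := Fin n), G S = 0 := by
    have hne : (Finset.univ.powersetCard k (α := Fin n)).Nonempty := by
      apply Finset.powersetCard_nonempty.mpr
      simpa using hk
    obtain ⟨S₀, hS₀⟩ := hne
    set c := (Finset.univ.filter (fun σ => Φ σ = S₀)).card with hc
    have hc0 : c ≠ 0 := by
      rw [hc]
      obtain ⟨σ₀, hσ₀⟩ := exists_perm hk S₀ (Finset.mem_powersetCard.mp hS₀).2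
      have : σ₀ ∈ Finset.univ.filter (fun σ => Φ σ = S₀) := by
        rw [Finset.mem_filter]
        exact ⟨Finset.mem_univ _, hΦperm S₀ _ σ₀ hσ₀⟩
      intro hcon
      rw [Finset.card_eq_zero] at hcon
      rw [hcon] at this
      exact absurd this (Finset.notMem_empty _)
    have h1 : ∑ S ∈ Finset.univ.powersetCard k (α := Fin n), (c : ℂ) * G S = 0 := by
      rw [← hsum0, ← hfib]
      refine Finset.sum_congr rfl (fun S hS => ?_)
      rw [Finset.sum_const, hcard_const S hS S₀ hS₀, ← hc, nsmul_eq_mul]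
    rw [← Finset.mul_sum] at h1
    rcases mul_eq_zero.mp h1 with h | h
    · exact absurd (by exact_mod_cast h) hc0
    · exact h
  have hflip : ∀ S : Finset (Fin n), S.card = k →
      ∏ i ∈ S, ∏ j ∈ Sᶜ, (y i - y j) =
        (-1 : ℂ) ^ (k * (n - k)) * ∏ i ∈ S, ∏ j ∈ Sᶜ, (y j - y i) := by
    intro S hS
    have hcc : Sᶜ.card = n - k := by
      rw [Finset.card_compl, hS]; simp
    calc ∏ i ∈ S, ∏ j ∈ Sᶜ, (y i - y j)
        = ∏ i ∈ S, ((-1 : ℂ) ^ (n - k) * ∏ j ∈ Sᶜ, (y j - y i)) := by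
          refine Finset.prod_congr rfl (fun i _ => ?_)
          rw [← hcc, ← Finset.prod_const (-1 : ℂ), ← Finset.prod_mul_distrib]
          exact Finset.prod_congr rfl (fun j _ => by ring)
      _ = ((-1 : ℂ) ^ (n - k)) ^ k * ∏ i ∈ S, ∏ j ∈ Sᶜ, (y j - y i) := by
          rw [Finset.prod_mul_distrib, Finset.prod_const, hS]
      _ = (-1 : ℂ) ^ (k * (n - k)) * ∏ i ∈ S, ∏ j ∈ Sᶜ, (y j - y i) := by
          rw [← pow_mul, Nat.mul_comm]
  have hterm : ∀ S : {x // x ∈ Finset.univ.powersetCard k (α := Fin n)},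
      MvPolynomial.eval
          (fun i => y (S.1.orderEmbOfFin (Finset.mem_powersetCard.mp S.2).2 i)) f /
        ∏ i ∈ S.1, ∏ j ∈ S.1ᶜ, (y i - y j)
      = ((-1 : ℂ) ^ (k * (n - k)))⁻¹ * Δy⁻¹ * G S.1 := by
    intro S
    have hS : S.1.card = k := (Finset.mem_powersetCard.mp S.2).2
    rw [hflip S.1 hS]
    have hG : G S.1 = MvPolynomial.eval (fun i => y (S.1.orderEmbOfFin hS i)) f * Δy /
        (∏ i ∈ S.1, ∏ j ∈ S.1ᶜ, (y j - y i)) := by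
      rw [hGdef]
      simp only []
      rw [dif_pos hS]
    rw [hG]
    have hD := hDS S.1
    have hm1 : (-1 : ℂ) ^ (k * (n - k)) ≠ 0 := by
      apply pow_ne_zero; norm_num
    field_simp
  rw [Finset.sum_congr rfl (fun S _ => hterm S)]
  rw [Finset.sum_attach (Finset.univ.powersetCard k (α := Fin n))
    (fun S => ((-1 : ℂ) ^ (k * (n - k)))⁻¹ * Δy⁻¹ * G S)]
  rw [← Finset.mul_sum, hGsum, mul_zero]
end

section
/- Let y_1, ..., y_n be pairwise distinct complex numbers and f a symmetric polynomial in k variables with deg f = k(n-k). Then Σ over all k-element subsets S = {i_1,...,i_k} of {1,...,n} of f(y_{i_1},...,y_{i_k}) / ∏_{i∈S, j∉S}(y_i - y_j) is independent of y_1,...,y_n (it is a constant depending only on f). -/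
open MvPolynomial Finset Equiv

namespace EqLoc

variable {n k : ℕ}

def pairs (n : ℕ) : Finset (Fin n × Fin n) := univ.filter (fun p => p.1 < p.2)

def nc (n k : ℕ) : Finset (Fin n × Fin n) :=
  (pairs n).filter (fun p => ((p.1 : ℕ) < k ↔ (p.2 : ℕ) < k))

def cr (n k : ℕ) : Finset (Fin n × Fin n) :=
  (pairs n).filter (fun p => ¬((p.1 : ℕ) < k ↔ (p.2 : ℕ) < k))

lemma prod_pairs {M : Type*} [CommMonoid M] (g : Fin n × Fin n → M) :
    ∏ p ∈ pairs n, g p = ∏ i, ∏ j ∈ Finset.Ioi i, g (i, j) := by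
  rw [pairs, ← Finset.univ_product_univ, Finset.prod_filter, Finset.prod_product]
  refine Finset.prod_congr rfl fun i _ => ?_
  rw [← Finset.prod_filter]
  congr 1
  ext j
  simp [Finset.mem_Ioi]

lemma prod_pairs_comp {R : Type*} [CommRing R] (v : Fin n → R) (σ : Perm (Fin n)) :
    ∏ p ∈ pairs n, (v (σ p.2) - v (σ p.1)) =
      ((Perm.sign σ : ℤ) : R) * ∏ p ∈ pairs n, (v p.2 - v p.1) := by
  have h1 : ∏ p ∈ pairs n, (v (σ p.2) - v (σ p.1)) = (Matrix.vandermonde (v ∘ σ)).det := by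
    rw [Matrix.det_vandermonde, prod_pairs]
    rfl
  have h2 : ∏ p ∈ pairs n, (v p.2 - v p.1) = (Matrix.vandermonde v).det := by
    rw [Matrix.det_vandermonde, prod_pairs]
  rw [h1, h2]
  have h3 : Matrix.vandermonde (v ∘ σ) = (Matrix.vandermonde v).submatrix (⇑σ) id := by
    ext i j
    simp [Matrix.vandermonde_apply, Matrix.submatrix_apply]
  rw [h3, Matrix.det_permute]

/-- the noncrossing Vandermonde-type factor attached to σ -/
noncomputable def NC (k : ℕ) (σ : Perm (Fin n)) : MvPolynomial (Fin n) ℂ :=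
  ∏ p ∈ nc n k, (X (σ p.2) - X (σ p.1))

noncomputable def P (hk : k ≤ n) (f : MvPolynomial (Fin k) ℂ) : MvPolynomial (Fin n) ℂ :=
  ∑ σ : Perm (Fin n), (Perm.sign σ : ℤ) • (rename (⇑σ ∘ Fin.castLE hk) f * NC k σ)

noncomputable def Vd (n : ℕ) : MvPolynomial (Fin n) ℂ :=
  ∏ p ∈ pairs n, (X p.2 - X p.1)

lemma rename_Vd (π : Perm (Fin n)) : rename ⇑π (Vd n) = (Perm.sign π : ℤ) • Vd n := by
  have := prod_pairs_comp (R := MvPolynomial (Fin n) ℂ) (fun i => X i) π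
  rw [Vd, map_prod]
  simp only [map_sub, rename_X]
  rw [this, zsmul_eq_mul]

lemma sign_mul_self_smul {M : Type*} [AddCommGroup M] (π : Perm (Fin n)) (x : M) :
    (Perm.sign π : ℤ) • (Perm.sign π : ℤ) • x = x := by
  rw [smul_smul, ← Units.val_mul, ← map_mul]
  simp

lemma rename_P (hk : k ≤ n) (f : MvPolynomial (Fin k) ℂ) (π : Perm (Fin n)) :
    rename ⇑π (P hk f) = (Perm.sign π : ℤ) • P hk f := by
  rw [P, map_sum, Finset.smul_sum]
  refine Fintype.sum_equiv (Equiv.mulLeft π) _ _ (fun σ => ?_)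
  simp only [Equiv.coe_mulLeft]
  have hmul : ⇑(π * σ) = ⇑π ∘ ⇑σ := rfl
  rw [map_zsmul, smul_smul]
  have hsgn : ((Perm.sign π : ℤ)) * (Perm.sign (π * σ) : ℤ) = (Perm.sign σ : ℤ) := by
    rw [map_mul]
    push_cast
    rw [← mul_assoc]
    norm_cast
    simp [Int.units_mul_self]
  rw [hsgn]
  congr 1
  rw [map_mul]
  congr 1
  · rw [rename_rename, hmul, Function.comp_assoc]
  · rw [NC, NC, map_prod]
    refine Finset.prod_congr rfl fun p _ => ?_
    rw [map_sub, rename_X, rename_X, hmul]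
    rfl

lemma coeff_alt {p : MvPolynomial (Fin n) ℂ}
    (hp : ∀ π : Perm (Fin n), rename ⇑π p = (Perm.sign π : ℤ) • p)
    (m : Fin n →₀ ℕ) (π : Perm (Fin n)) :
    coeff m p = (Perm.sign π : ℤ) • coeff (Finsupp.mapDomain ⇑π m) p := by
  have h := coeff_rename_mapDomain ⇑π π.injective p m
  rw [hp π, coeff_smul] at h
  rw [← h]

lemma coeff_alt_perm {p : MvPolynomial (Fin n) ℂ}
    (hp : ∀ π : Perm (Fin n), rename ⇑π p = (Perm.sign π : ℤ) • p)
    (m : Fin n →₀ ℕ) (π : Perm (Fin n)) :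
    coeff (Finsupp.mapDomain ⇑π m) p = (Perm.sign π : ℤ) • coeff m p := by
  rw [coeff_alt hp m π, sign_mul_self_smul]

lemma coeff_alt_zero {p : MvPolynomial (Fin n) ℂ}
    (hp : ∀ π : Perm (Fin n), rename ⇑π p = (Perm.sign π : ℤ) • p)
    {m : Fin n →₀ ℕ} {a b : Fin n} (hab : a ≠ b) (hm : m a = m b) :
    coeff m p = 0 := by
  have hmap : Finsupp.mapDomain ⇑(Equiv.swap a b) m = m := by
    ext j
    rw [Finsupp.mapDomain_equiv_apply]
    rcases eq_or_ne j a with rfl | hja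
    · simp [Equiv.symm_swap, Equiv.swap_apply_left, hm]
    rcases eq_or_ne j b with rfl | hjb
    · simp [Equiv.symm_swap, Equiv.swap_apply_right, hm]
    · rw [Equiv.symm_swap, Equiv.swap_apply_of_ne_of_ne hja hjb]
  have h := coeff_alt hp m (Equiv.swap a b)
  rw [hmap, Equiv.Perm.sign_swap hab] at h
  simp only [Units.val_neg, Units.val_one, neg_smul, one_smul] at h
  linear_combination h / 2

noncomputable def st (n : ℕ) : Fin n →₀ ℕ := ∑ i : Fin n, Finsupp.single i (i : ℕ)

lemma sum_single_apply (c : Fin n → ℕ) (e : Perm (Fin n)) (j : Fin n) :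
    (∑ i : Fin n, Finsupp.single (e i) (c i)) j = c (e.symm j) := by
  rw [Finsupp.finset_sum_apply]
  rw [Finset.sum_eq_single (e.symm j)]
  · simp [Finsupp.single_apply]
  · intro i _ hi
    rw [Finsupp.single_apply, if_neg]
    intro h
    exact hi (by simp [← h])
  · simp

lemma st_apply (j : Fin n) : st n j = (j : ℕ) := by
  have := sum_single_apply (fun i : Fin n => (i : ℕ)) 1 j
  rw [show (((1 : Perm (Fin n)).symm j : Fin n) : ℕ) = (j : ℕ) from rfl] at this
  simpa [st] using this

lemma mapDomain_st_apply (π : Perm (Fin n)) (j : Fin n) :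
    (Finsupp.mapDomain ⇑π (st n)) j = ((π.symm j : Fin n) : ℕ) := by
  rw [Finsupp.mapDomain_equiv_apply, st_apply]

/-- if m is injective and its total sum is at most the staircase sum, it is a
permuted staircase -/
lemma eq_mapDomain_st {m : Fin n →₀ ℕ} (hinj : Function.Injective ⇑m)
    (hsum : (m.sum fun _ e => e) ≤ ∑ i : Fin n, (i : ℕ)) :
    ∃ π : Perm (Fin n), m = Finsupp.mapDomain ⇑π (st n) := by
  classical
  set π₀ := Tuple.sort ⇑m with hπ₀
  have hmono : Monotone (⇑m ∘ ⇑π₀) := Tuple.monotone_sort ⇑m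
  have hsm : StrictMono (⇑m ∘ ⇑π₀) :=
    hmono.strictMono_of_injective (hinj.comp π₀.injective)
  have hle : ∀ i : Fin n, (i : ℕ) ≤ m (π₀ i) := by
    suffices h : ∀ v : ℕ, ∀ i : Fin n, (i : ℕ) = v → v ≤ m (π₀ i) by
      intro i; exact h _ i rfl
    intro v
    induction v with
    | zero => intro i _; exact Nat.zero_le _
    | succ v ih =>
      intro i hi
      have hlt := i.isLt
      have hv : v < n := by omega
      have h1 : (⟨v, hv⟩ : Fin n) < i := by simp [Fin.lt_def]; omega
      have h2 : m (π₀ ⟨v, hv⟩) < m (π₀ i) := hsm h1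
      have h3 := ih ⟨v, hv⟩ rfl
      omega
  have hsum2 : (∑ i : Fin n, m (π₀ i)) = m.sum fun _ e => e := by
    rw [Finsupp.sum_fintype _ _ (fun _ => rfl)]
    exact Fintype.sum_equiv π₀ _ _ (fun i => rfl)
  have hsum3 : ∑ i : Fin n, (i : ℕ) = ∑ i : Fin n, m (π₀ i) := by
    have h1 : ∑ i : Fin n, (i : ℕ) ≤ ∑ i : Fin n, m (π₀ i) :=
      Finset.sum_le_sum (fun i _ => hle i)
    omega
  have heq : ∀ i : Fin n, i ∈ Finset.univ → (↑i : ℕ) = m (π₀ i) :=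
    (Finset.sum_eq_sum_iff_of_le (fun i _ => hle i)).mp hsum3
  refine ⟨π₀, ?_⟩
  ext j
  rw [mapDomain_st_apply]
  have := heq (π₀.symm j) (Finset.mem_univ _)
  rw [Equiv.apply_symm_apply] at this
  omega

lemma prod_pairs' {M : Type*} [CommMonoid M] (g : Fin n × Fin n → M) :
    ∏ p ∈ pairs n, g p = ∏ j, ∏ i ∈ Finset.Iio j, g (i, j) := by
  rw [pairs, ← Finset.univ_product_univ, Finset.prod_filter, Finset.prod_product_right]
  refine Finset.prod_congr rfl fun j _ => ?_
  rw [← Finset.prod_filter]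
  congr 1
  ext i
  simp [Finset.mem_Iio]

lemma sum_pairs' {M : Type*} [AddCommMonoid M] (g : Fin n × Fin n → M) :
    ∑ p ∈ pairs n, g p = ∑ j, ∑ i ∈ Finset.Iio j, g (i, j) := by
  rw [pairs, ← Finset.univ_product_univ, Finset.sum_filter, Finset.sum_product_right]
  refine Finset.sum_congr rfl fun j _ => ?_
  rw [← Finset.sum_filter]
  congr 1
  ext i
  simp [Finset.mem_Iio]

lemma card_pairs : (pairs n).card = ∑ j : Fin n, (j : ℕ) := by
  rw [Finset.card_eq_sum_ones, sum_pairs' (fun _ => 1)]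
  refine Finset.sum_congr rfl fun j _ => ?_
  rw [← Finset.card_eq_sum_ones, Fin.card_Iio]

lemma sum_st : ((st n).sum fun _ e => e) = (pairs n).card := by
  rw [Finsupp.sum_fintype _ _ (fun _ => rfl), card_pairs]
  exact Finset.sum_congr rfl fun j _ => st_apply j

lemma prod_X_pow {α : Type*} (s : Finset α) (e : α → Fin n) (c : α → ℕ) :
    (∏ a ∈ s, (X (e a) : MvPolynomial (Fin n) ℂ) ^ c a) =
      monomial (∑ a ∈ s, Finsupp.single (e a) (c a)) 1 := by
  classical
  induction s using Finset.induction with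
  | empty => simp [MvPolynomial.monomial_zero']
  | @insert a s h ih =>
    rw [Finset.prod_insert h, Finset.sum_insert h, ih, X_pow_eq_monomial, monomial_mul]
    simp

lemma Vd_eq_det :
    Vd n = (Matrix.vandermonde (fun i => (X i : MvPolynomial (Fin n) ℂ))).det := by
  rw [Vd, Matrix.det_vandermonde, prod_pairs]

lemma sum_single_eq_st_iff (σ : Perm (Fin n)) :
    (∑ i : Fin n, Finsupp.single (σ i) ((i : Fin n) : ℕ)) = st n ↔ σ = 1 := by
  constructor
  · intro h
    have hj : ∀ j : Fin n, ((σ.symm j : Fin n) : ℕ) = (j : ℕ) := by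
      intro j
      rw [← sum_single_apply (fun i : Fin n => (i : ℕ)) σ j, h, st_apply]
    have hsymm : σ.symm = 1 := Equiv.ext fun j => Fin.ext (hj j)
    rw [← Equiv.symm_symm σ, hsymm]
    rfl
  · rintro rfl
    simp [st]

lemma coeff_st_Vd : coeff (st n) (Vd n) = 1 := by
  classical
  rw [Vd_eq_det, Matrix.det_apply, MvPolynomial.coeff_sum]
  rw [Finset.sum_eq_single_of_mem (1 : Perm (Fin n)) (Finset.mem_univ _)]
  · simp only [Matrix.vandermonde_apply, coeff_smul]
    rw [prod_X_pow Finset.univ (fun i => (1 : Perm (Fin n)) i) (fun i => (i : ℕ))]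
    rw [coeff_monomial, if_pos]
    · simp
    · exact (sum_single_eq_st_iff 1).mpr rfl
  · intro σ _ hσ
    simp only [Matrix.vandermonde_apply, coeff_smul]
    rw [prod_X_pow Finset.univ (fun i => σ i) (fun i => (i : ℕ))]
    rw [coeff_monomial, if_neg]
    · simp
    · intro h
      exact hσ ((sum_single_eq_st_iff σ).mp h)

lemma totalDegree_X_sub (a b : Fin n) :
    (X a - X b : MvPolynomial (Fin n) ℂ).totalDegree ≤ 1 := by
  rw [sub_eq_add_neg]
  refine le_trans (totalDegree_add _ _) ?_
  rw [totalDegree_neg]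
  simp [totalDegree_X]

lemma deg_Vd : (Vd n).totalDegree ≤ (pairs n).card := by
  refine le_trans (totalDegree_finset_prod _ _) ?_
  refine le_trans (Finset.sum_le_sum fun p _ => totalDegree_X_sub p.2 p.1) ?_
  simp

lemma eq_smul_Vd {p : MvPolynomial (Fin n) ℂ}
    (hp : ∀ π : Perm (Fin n), rename ⇑π p = (Perm.sign π : ℤ) • p)
    (hdeg : p.totalDegree ≤ (pairs n).card) :
    p = coeff (st n) p • Vd n := by
  ext m
  rw [coeff_smul]
  by_cases hrep : ∃ a b : Fin n, a ≠ b ∧ m a = m b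
  · obtain ⟨a, b, hab, hm⟩ := hrep
    rw [coeff_alt_zero hp hab hm, coeff_alt_zero (fun π => rename_Vd π) hab hm]
    simp
  · have hinj : Function.Injective ⇑m := by
      intro a b h
      by_contra hab
      exact hrep ⟨a, b, hab, h⟩
    by_cases hzero : coeff m p = 0 ∧ coeff m (Vd n) = 0
    · rw [hzero.1, hzero.2]
      simp
    · have hsupp : (m.sum fun _ e => e) ≤ (pairs n).card := by
        rcases not_and_or.mp hzero with h | h
        · exact le_trans (le_totalDegree (mem_support_iff.mpr h)) hdeg
        · exact le_trans (le_totalDegree (mem_support_iff.mpr h)) deg_Vd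
      obtain ⟨π, rfl⟩ := eq_mapDomain_st hinj (by rwa [← card_pairs])
      rw [coeff_alt_perm hp _ π, coeff_alt_perm (fun ρ => rename_Vd ρ) _ π, coeff_st_Vd]
      rw [zsmul_eq_mul, zsmul_eq_mul, smul_eq_mul]
      ring

lemma filter_lt_eq (hk : k ≤ n) :
    (univ.filter (fun i : Fin n => (i : ℕ) < k)) = univ.image (Fin.castLE hk) := by
  ext i
  constructor
  · intro hi
    rw [Finset.mem_filter] at hi
    rw [Finset.mem_image]
    exact ⟨⟨(i : ℕ), hi.2⟩, Finset.mem_univ _, Fin.ext rfl⟩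
  · intro hi
    rw [Finset.mem_image] at hi
    obtain ⟨j, -, rfl⟩ := hi
    rw [Finset.mem_filter]
    exact ⟨Finset.mem_univ _, j.isLt⟩

lemma card_filter_lt (hk : k ≤ n) :
    (univ.filter (fun i : Fin n => (i : ℕ) < k)).card = k := by
  rw [filter_lt_eq hk, Finset.card_image_of_injective _ (Fin.castLE_injective hk)]
  simp

lemma cr_eq :
    cr n k = (univ.filter (fun i : Fin n => (i : ℕ) < k)) ×ˢ
      (univ.filter (fun j : Fin n => ¬ (j : ℕ) < k)) := by
  ext p
  simp only [cr, pairs, Finset.mem_filter, Finset.mem_univ, true_and, Finset.mem_product]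
  constructor
  · rintro ⟨hlt, hne⟩
    have hval : (p.1 : ℕ) < (p.2 : ℕ) := hlt
    by_cases h1 : (p.1 : ℕ) < k
    · refine ⟨h1, fun h2 => hne (iff_of_true h1 h2)⟩
    · have h2 : ¬ (p.2 : ℕ) < k := by omega
      exact absurd (iff_of_false h1 h2) hne
  · rintro ⟨h1, h2⟩
    have hval : (p.1 : ℕ) < (p.2 : ℕ) := by omega
    exact ⟨hval, fun hiff => h2 (hiff.mp h1)⟩

lemma card_cr (hk : k ≤ n) : (cr n k).card = k * (n - k) := by
  rw [cr_eq, Finset.card_product, card_filter_lt hk]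
  have h := Finset.card_filter_add_card_filter_not
    (s := (univ : Finset (Fin n))) (p := fun i : Fin n => (i : ℕ) < k)
  rw [card_filter_lt hk] at h
  simp only [Finset.card_univ, Fintype.card_fin] at h
  congr 1
  omega

lemma nc_cr_card : (nc n k).card + (cr n k).card = (pairs n).card := by
  rw [nc, cr]
  exact Finset.card_filter_add_card_filter_not _

lemma deg_NC (σ : Perm (Fin n)) : (NC k σ).totalDegree ≤ (nc n k).card := by
  refine le_trans (totalDegree_finset_prod _ _) ?_
  refine le_trans (Finset.sum_le_sum fun p _ => totalDegree_X_sub (σ p.2) (σ p.1)) ?_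
  simp

lemma deg_P (hk : k ≤ n) (f : MvPolynomial (Fin k) ℂ)
    (hdeg : f.totalDegree = k * (n - k)) :
    (P hk f).totalDegree ≤ (pairs n).card := by
  refine le_trans (totalDegree_finset_sum _ _) ?_
  rw [Finset.sup_le_iff]
  intro σ _
  refine le_trans (totalDegree_smul_le _ _) ?_
  refine le_trans (totalDegree_mul _ _) ?_
  have h1 : (rename (⇑σ ∘ Fin.castLE hk) f).totalDegree ≤ k * (n - k) :=
    hdeg ▸ totalDegree_rename_le _ _
  have h2 := deg_NC (k := k) σ
  have h3 := nc_cr_card (n := n) (k := k)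
  have h4 := card_cr hk
  omega

lemma P_eq (hk : k ≤ n) (f : MvPolynomial (Fin k) ℂ)
    (hdeg : f.totalDegree = k * (n - k)) :
    P hk f = coeff (st n) (P hk f) • Vd n :=
  eq_smul_Vd (rename_P hk f) (deg_P hk f hdeg)

lemma sign_sq (σ : Perm (Fin n)) : ((Perm.sign σ : ℤ) : ℂ) * ((Perm.sign σ : ℤ) : ℂ) = 1 := by
  norm_cast
  simp [Int.units_mul_self]

lemma Vy_ne_zero {y : Fin n → ℂ} (hy : Function.Injective y) :
    (∏ p ∈ pairs n, (y p.2 - y p.1)) ≠ 0 := by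
  rw [Finset.prod_ne_zero_iff]
  intro p hp
  rw [pairs, Finset.mem_filter] at hp
  exact sub_ne_zero.mpr (fun h => absurd (hy h) (ne_of_gt hp.2))

lemma Dcr_ne_zero {y : Fin n → ℂ} (hy : Function.Injective y) (σ : Perm (Fin n)) :
    (∏ p ∈ cr n k, (y (σ p.2) - y (σ p.1))) ≠ 0 := by
  rw [Finset.prod_ne_zero_iff]
  intro p hp
  rw [cr, Finset.mem_filter, pairs, Finset.mem_filter] at hp
  refine sub_ne_zero.mpr (fun h => ?_)
  exact absurd (σ.injective (hy h)) (ne_of_gt hp.1.2)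

lemma eval_term {y : Fin n → ℂ} (hy : Function.Injective y) (hk : k ≤ n)
    (f : MvPolynomial (Fin k) ℂ) (σ : Perm (Fin n)) :
    eval y ((Perm.sign σ : ℤ) • (rename (⇑σ ∘ Fin.castLE hk) f * NC k σ)) =
      (∏ p ∈ pairs n, (y p.2 - y p.1)) *
        (eval (y ∘ ⇑σ ∘ Fin.castLE hk) f / ∏ p ∈ cr n k, (y (σ p.2) - y (σ p.1))) := by
  have hsplit := Finset.prod_filter_mul_prod_filter_not (pairs n)
    (fun p : Fin n × Fin n => ((p.1 : ℕ) < k ↔ (p.2 : ℕ) < k))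
    (fun p : Fin n × Fin n => y (σ p.2) - y (σ p.1))
  have hcomp := prod_pairs_comp y σ
  have hnc : (∏ p ∈ nc n k, (y (σ p.2) - y (σ p.1))) *
        (∏ p ∈ cr n k, (y (σ p.2) - y (σ p.1))) =
      ((Perm.sign σ : ℤ) : ℂ) * (∏ p ∈ pairs n, (y p.2 - y p.1)) := by
    rw [nc, cr] at *
    rw [hsplit, hcomp]
  rw [map_zsmul, map_mul, eval_rename]
  have hNC : eval y (NC k σ) = ∏ p ∈ nc n k, (y (σ p.2) - y (σ p.1)) := by
    rw [NC, map_prod]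
    refine Finset.prod_congr rfl fun p _ => ?_
    simp
  rw [hNC, zsmul_eq_mul, mul_div_assoc', eq_div_iff (Dcr_ne_zero hy σ)]
  linear_combination (((Perm.sign σ : ℤ) : ℂ) * (eval (y ∘ ⇑σ ∘ Fin.castLE hk)) f) * hnc +
    ((eval (y ∘ ⇑σ ∘ Fin.castLE hk)) f * (∏ p ∈ pairs n, (y p.2 - y p.1))) * (sign_sq σ)

lemma eval_P {y : Fin n → ℂ} (hy : Function.Injective y) (hk : k ≤ n)
    (f : MvPolynomial (Fin k) ℂ) :
    eval y (P hk f) = (∏ p ∈ pairs n, (y p.2 - y p.1)) *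
      ∑ σ : Perm (Fin n),
        eval (y ∘ ⇑σ ∘ Fin.castLE hk) f / ∏ p ∈ cr n k, (y (σ p.2) - y (σ p.1)) := by
  rw [P, map_sum, Finset.mul_sum]
  exact Finset.sum_congr rfl fun σ _ => eval_term hy hk f σ

/-- the image of the first k indices under σ -/
def im (hk : k ≤ n) (σ : Perm (Fin n)) : Finset (Fin n) :=
  univ.image (fun i : Fin k => σ (Fin.castLE hk i))

lemma im_eq (hk : k ≤ n) (σ : Perm (Fin n)) :
    im hk σ = (univ.image (Fin.castLE hk)).image ⇑σ := by
  rw [Finset.image_image]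
  rfl

lemma im_card (hk : k ≤ n) (σ : Perm (Fin n)) : (im hk σ).card = k := by
  have hinj : Function.Injective (fun i : Fin k => σ (Fin.castLE hk i)) :=
    fun a b hab => (Fin.castLE_injective hk) (σ.injective hab)
  rw [im, Finset.card_image_of_injective _ hinj]
  simp

lemma im_mem (hk : k ≤ n) (σ : Perm (Fin n)) : im hk σ ∈ (univ : Finset (Fin n)).powersetCard k :=
  Finset.mem_powersetCard.mpr ⟨Finset.subset_univ _, im_card hk σ⟩

lemma im_one (hk : k ≤ n) : im hk 1 = univ.image (Fin.castLE hk) := by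
  rw [im_eq]
  simp

/-- denominator formula on a fiber -/
lemma denom_of_fiber {y : Fin n → ℂ} (hk : k ≤ n) {S : Finset (Fin n)}
    (σ : Perm (Fin n)) (hσ : im hk σ = S) :
    (∏ p ∈ cr n k, (y (σ p.2) - y (σ p.1))) = ∏ i ∈ S, ∏ j ∈ Sᶜ, (y j - y i) := by
  classical
  have hA : (univ.filter (fun i : Fin n => (i : ℕ) < k)).image ⇑σ = S := by
    rw [filter_lt_eq hk, ← im_eq hk σ, hσ]
  have hB : (univ.filter (fun j : Fin n => ¬ (j : ℕ) < k)).image ⇑σ = Sᶜ := by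
    rw [Finset.filter_not, Finset.image_sdiff _ _ σ.injective, Finset.image_univ_equiv,
      hA, Finset.compl_eq_univ_sdiff]
  rw [cr_eq, Finset.prod_product, ← hB, ← hA]
  rw [Finset.prod_image (fun a _ b _ h => σ.injective h)]
  refine Finset.prod_congr rfl fun a _ => ?_
  rw [Finset.prod_image (fun a _ b _ h => σ.injective h)]

/-- numerator formula on a fiber -/
lemma num_of_fiber {y : Fin n → ℂ} (hk : k ≤ n) {f : MvPolynomial (Fin k) ℂ}
    (hf : f.IsSymmetric) {S : Finset (Fin n)} (hcard : S.card = k)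
    (σ : Perm (Fin n)) (hσ : im hk σ = S) :
    eval (y ∘ ⇑σ ∘ Fin.castLE hk) f = eval (fun i => y (S.orderEmbOfFin hcard i)) f := by
  classical
  set e₁ : Fin k → Fin n := fun i => σ (Fin.castLE hk i) with he₁def
  have he₁S : ∀ i, e₁ i ∈ S := by
    intro i
    rw [← hσ, im]
    exact Finset.mem_image_of_mem _ (Finset.mem_univ i)
  set t : Fin k → Fin k := fun i => (S.orderIsoOfFin hcard).symm ⟨e₁ i, he₁S i⟩ with htdef
  have ht : ∀ i, S.orderEmbOfFin hcard (t i) = e₁ i := by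
    intro i
    rw [← Finset.coe_orderIsoOfFin_apply, htdef]
    simp
  have htinj : Function.Injective t := by
    intro a b hab
    have : e₁ a = e₁ b := by rw [← ht a, ← ht b, hab]
    exact (Fin.castLE_injective hk) (σ.injective this)
  let τ : Perm (Fin k) := Equiv.ofBijective t (Finite.injective_iff_bijective.mp htinj)
  have hτ : ∀ i, τ i = t i := fun i => rfl
  have key : eval (fun i => y (S.orderEmbOfFin hcard i)) f =
      eval ((fun i => y (S.orderEmbOfFin hcard i)) ∘ ⇑τ) f := by
    conv_lhs => rw [← hf τ, eval_rename]
  have hfun : (fun i => y (S.orderEmbOfFin hcard i)) ∘ ⇑τ = y ∘ ⇑σ ∘ Fin.castLE hk := by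
    funext i
    simp only [Function.comp_apply, hτ, ht]
    rfl
  rw [key, hfun]

lemma card_S0 (hk : k ≤ n) : ((univ : Finset (Fin k)).image (Fin.castLE hk)).card = k := by
  rw [Finset.card_image_of_injective _ (Fin.castLE_injective hk)]
  simp

lemma card_S0c (hk : k ≤ n) : ((univ : Finset (Fin k)).image (Fin.castLE hk))ᶜ.card = n - k := by
  rw [Finset.card_compl, card_S0 hk]
  simp

lemma card_Sc {S : Finset (Fin n)} (hcard : S.card = k) : Sᶜ.card = n - k := by
  rw [Finset.card_compl, hcard]
  simp

/-- the function underlying the canonical permutation mapping S₀ to S -/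
noncomputable def rfun (hk : k ≤ n) (S : Finset (Fin n)) (hcard : S.card = k) (x : Fin n) :
    Fin n :=
  if hx : x ∈ (univ : Finset (Fin k)).image (Fin.castLE hk) then
    (S.orderIsoOfFin hcard
      ((((univ : Finset (Fin k)).image (Fin.castLE hk)).orderIsoOfFin (card_S0 hk)).symm
        ⟨x, hx⟩) : Fin n)
  else
    (Sᶜ.orderIsoOfFin (card_Sc hcard)
      ((((univ : Finset (Fin k)).image (Fin.castLE hk))ᶜ.orderIsoOfFin (card_S0c hk)).symm
        ⟨x, Finset.mem_compl.mpr hx⟩) : Fin n)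

lemma rfun_mem_pos (hk : k ≤ n) {S : Finset (Fin n)} (hcard : S.card = k) {x : Fin n}
    (hx : x ∈ (univ : Finset (Fin k)).image (Fin.castLE hk)) :
    rfun hk S hcard x ∈ S := by
  rw [rfun, dif_pos hx]
  exact Finset.coe_mem _

lemma rfun_mem_neg (hk : k ≤ n) {S : Finset (Fin n)} (hcard : S.card = k) {x : Fin n}
    (hx : ¬ x ∈ (univ : Finset (Fin k)).image (Fin.castLE hk)) :
    rfun hk S hcard x ∈ Sᶜ := by
  rw [rfun, dif_neg hx]
  exact Finset.coe_mem _

lemma rfun_inj (hk : k ≤ n) (S : Finset (Fin n)) (hcard : S.card = k) :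
    Function.Injective (rfun hk S hcard) := by
  intro a b hab
  by_cases ha : a ∈ (univ : Finset (Fin k)).image (Fin.castLE hk) <;>
    by_cases hb : b ∈ (univ : Finset (Fin k)).image (Fin.castLE hk)
  · rw [rfun, dif_pos ha, rfun, dif_pos hb] at hab
    have h1 := (S.orderIsoOfFin hcard).injective (Subtype.ext hab)
    have h2 := (((univ : Finset (Fin k)).image (Fin.castLE hk)).orderIsoOfFin
      (card_S0 hk)).symm.injective h1
    exact Subtype.ext_iff.mp h2
  · have h1 := rfun_mem_pos hk hcard (x := a) ha
    have h2 := rfun_mem_neg hk hcard (x := b) hb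
    rw [hab] at h1
    exact absurd h1 (Finset.mem_compl.mp h2)
  · have h1 := rfun_mem_neg hk hcard (x := a) ha
    have h2 := rfun_mem_pos hk hcard (x := b) hb
    rw [hab] at h1
    exact absurd h2 (Finset.mem_compl.mp h1)
  · rw [rfun, dif_neg ha, rfun, dif_neg hb] at hab
    have h1 := (Sᶜ.orderIsoOfFin (card_Sc hcard)).injective (Subtype.ext hab)
    have h2 := ((((univ : Finset (Fin k)).image (Fin.castLE hk))ᶜ.orderIsoOfFin
      (card_S0c hk)).symm.injective h1)
    exact Subtype.ext_iff.mp h2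

noncomputable def rho (hk : k ≤ n) (S : Finset (Fin n)) (hcard : S.card = k) : Perm (Fin n) :=
  Equiv.ofBijective (rfun hk S hcard)
    (Finite.injective_iff_bijective.mp (rfun_inj hk S hcard))

lemma rho_apply (hk : k ≤ n) (S : Finset (Fin n)) (hcard : S.card = k) (x : Fin n) :
    rho hk S hcard x = rfun hk S hcard x := rfl

lemma image_rho (hk : k ≤ n) (S : Finset (Fin n)) (hcard : S.card = k) :
    ((univ : Finset (Fin k)).image (Fin.castLE hk)).image ⇑(rho hk S hcard) = S := by
  refine Finset.eq_of_subset_of_card_le ?_ ?_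
  · intro x hx
    rw [Finset.mem_image] at hx
    obtain ⟨a, ha, rfl⟩ := hx
    rw [rho_apply]
    exact rfun_mem_pos hk hcard ha
  · rw [Finset.card_image_of_injective _ (rho hk S hcard).injective, card_S0 hk, hcard]

lemma im_mul (hk : k ≤ n) (π σ : Perm (Fin n)) :
    im hk (π * σ) = (im hk σ).image ⇑π := by
  rw [im, im, Finset.image_image]
  rfl

lemma image_rho_inv (hk : k ≤ n) (S : Finset (Fin n)) (hcard : S.card = k) :
    S.image ⇑(rho hk S hcard)⁻¹ = (univ : Finset (Fin k)).image (Fin.castLE hk) := by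
  have h := congrArg (Finset.image ⇑(rho hk S hcard)⁻¹) (image_rho hk S hcard)
  rw [Finset.image_image] at h
  have hid : ⇑(rho hk S hcard)⁻¹ ∘ ⇑(rho hk S hcard) = id := by
    funext x
    simp
  rw [hid, Finset.image_id] at h
  exact h.symm

lemma card_fib (hk : k ≤ n) {S : Finset (Fin n)} (hcard : S.card = k) :
    (univ.filter (fun σ : Perm (Fin n) => im hk σ = S)).card =
      (univ.filter (fun σ : Perm (Fin n) =>
        im hk σ = (univ : Finset (Fin k)).image (Fin.castLE hk))).card := by
  refine Finset.card_bij' (fun σ _ => (rho hk S hcard)⁻¹ * σ)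
    (fun σ _ => (rho hk S hcard) * σ) ?_ ?_ ?_ ?_
  · intro σ hσ
    rw [Finset.mem_filter] at hσ ⊢
    refine ⟨Finset.mem_univ _, ?_⟩
    rw [im_mul, hσ.2, image_rho_inv]
  · intro σ hσ
    rw [Finset.mem_filter] at hσ ⊢
    refine ⟨Finset.mem_univ _, ?_⟩
    rw [im_mul, hσ.2, image_rho]
  · intro σ _
    group
  · intro σ _
    group

lemma prod_neg' {α : Type*} (s : Finset α) (g : α → ℂ) :
    ∏ x ∈ s, (-g x) = (-1) ^ s.card * ∏ x ∈ s, g x := by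
  have : ∀ x ∈ s, -g x = (-1) * g x := fun x _ => by ring
  rw [Finset.prod_congr rfl this, Finset.prod_mul_distrib, Finset.prod_const]

lemma eval_Vd (y : Fin n → ℂ) : eval y (Vd n) = ∏ p ∈ pairs n, (y p.2 - y p.1) := by
  rw [Vd, map_prod]
  refine Finset.prod_congr rfl fun p _ => ?_
  simp

lemma main (hk : k ≤ n) (f : MvPolynomial (Fin k) ℂ) (hf : f.IsSymmetric)
    (hdeg : f.totalDegree = k * (n - k)) (y : Fin n → ℂ) (hy : Function.Injective y) :
    ∑ S ∈ (Finset.univ.powersetCard k).attach,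
      MvPolynomial.eval
          (fun i => y (S.1.orderEmbOfFin (Finset.mem_powersetCard.mp S.2).2 i)) f /
        ∏ i ∈ S.1, ∏ j ∈ S.1ᶜ, (y i - y j) =
      coeff (st n) (P hk f) * ((-1 : ℂ) ^ (n - k)) ^ k /
        ((univ.filter (fun σ : Perm (Fin n) =>
          im hk σ = (univ : Finset (Fin k)).image (Fin.castLE hk))).card : ℂ) := by
  classical
  set L : ℕ := (univ.filter (fun σ : Perm (Fin n) =>
    im hk σ = (univ : Finset (Fin k)).image (Fin.castLE hk))).card with hLdef
  set ε : ℂ := ((-1 : ℂ) ^ (n - k)) ^ k with hεdef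
  set Vy : ℂ := ∏ p ∈ pairs n, (y p.2 - y p.1) with hVydef
  have hVy0 : Vy ≠ 0 := Vy_ne_zero hy
  have hε0 : ε ≠ 0 := by
    rw [hεdef]
    exact pow_ne_zero _ (pow_ne_zero _ (by norm_num))
  have hL0 : (L : ℂ) ≠ 0 := by
    rw [Nat.cast_ne_zero, hLdef]
    refine Finset.card_ne_zero_of_mem (a := (1 : Perm (Fin n))) ?_
    rw [Finset.mem_filter]
    exact ⟨Finset.mem_univ _, im_one hk⟩
  have h1 : eval y (P hk f) = coeff (st n) (P hk f) * Vy := by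
    conv_lhs => rw [P_eq hk f hdeg]
    rw [MvPolynomial.smul_eq_C_mul, map_mul, eval_C, eval_Vd]
  have h2 := eval_P hy hk f
  have h3 : (∑ σ : Perm (Fin n),
      eval (y ∘ ⇑σ ∘ Fin.castLE hk) f / ∏ p ∈ cr n k, (y (σ p.2) - y (σ p.1))) =
      ∑ S ∈ (Finset.univ.powersetCard k).attach,
        ∑ σ ∈ univ.filter (fun σ : Perm (Fin n) => im hk σ = S.1),
          (eval (y ∘ ⇑σ ∘ Fin.castLE hk) f / ∏ p ∈ cr n k, (y (σ p.2) - y (σ p.1))) := by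
    rw [Finset.sum_attach ((Finset.univ.powersetCard k))
      (fun S => ∑ σ ∈ univ.filter (fun σ : Perm (Fin n) => im hk σ = S),
        (eval (y ∘ ⇑σ ∘ Fin.castLE hk) f / ∏ p ∈ cr n k, (y (σ p.2) - y (σ p.1))))]
    exact (Finset.sum_fiberwise_of_maps_to (fun σ _ => im_mem hk σ) _).symm
  have h4 : ∀ S : {x // x ∈ (Finset.univ : Finset (Fin n)).powersetCard k},
      (∑ σ ∈ univ.filter (fun σ : Perm (Fin n) => im hk σ = S.1),
        (eval (y ∘ ⇑σ ∘ Fin.castLE hk) f / ∏ p ∈ cr n k, (y (σ p.2) - y (σ p.1)))) =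
      (L : ℂ) * ((eval (fun i => y (S.1.orderEmbOfFin (Finset.mem_powersetCard.mp S.2).2 i)) f) /
        (ε * ∏ i ∈ S.1, ∏ j ∈ S.1ᶜ, (y i - y j))) := by
    intro S
    have hcard := (Finset.mem_powersetCard.mp S.2).2
    have hconst : ∀ σ ∈ univ.filter (fun σ : Perm (Fin n) => im hk σ = S.1),
        (eval (y ∘ ⇑σ ∘ Fin.castLE hk) f / ∏ p ∈ cr n k, (y (σ p.2) - y (σ p.1))) =
        (eval (fun i => y (S.1.orderEmbOfFin (Finset.mem_powersetCard.mp S.2).2 i)) f) /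
          (ε * ∏ i ∈ S.1, ∏ j ∈ S.1ᶜ, (y i - y j)) := by
      intro σ hσ
      rw [Finset.mem_filter] at hσ
      have hD : (∏ p ∈ cr n k, (y (σ p.2) - y (σ p.1))) =
          ε * ∏ i ∈ S.1, ∏ j ∈ S.1ᶜ, (y i - y j) := by
        rw [denom_of_fiber hk σ hσ.2]
        have hinner : ∀ i ∈ S.1, (∏ j ∈ S.1ᶜ, (y j - y i)) =
            (-1 : ℂ) ^ (n - k) * ∏ j ∈ S.1ᶜ, (y i - y j) := by
          intro i _
          have : ∀ j ∈ S.1ᶜ, y j - y i = -(y i - y j) := fun j _ => by ring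
          rw [Finset.prod_congr rfl this, prod_neg', card_Sc hcard]
        rw [Finset.prod_congr rfl hinner, Finset.prod_mul_distrib, Finset.prod_const, hcard,
          hεdef]
      rw [hD, num_of_fiber hk hf (Finset.mem_powersetCard.mp S.2).2 σ hσ.2]
    rw [Finset.sum_congr rfl hconst, Finset.sum_const, nsmul_eq_mul, card_fib hk hcard,
      ← hLdef]
  have h5 : (∑ σ : Perm (Fin n),
      eval (y ∘ ⇑σ ∘ Fin.castLE hk) f / ∏ p ∈ cr n k, (y (σ p.2) - y (σ p.1))) =
      (L : ℂ) / ε * ∑ S ∈ (Finset.univ.powersetCard k).attach,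
        (eval (fun i => y (S.1.orderEmbOfFin (Finset.mem_powersetCard.mp S.2).2 i)) f /
          ∏ i ∈ S.1, ∏ j ∈ S.1ᶜ, (y i - y j)) := by
    rw [h3, Finset.mul_sum]
    refine Finset.sum_congr rfl fun S _ => ?_
    rw [h4 S]
    field_simp
  rw [h5] at h2
  have hVyfold : (∏ p ∈ pairs n, (y p.2 - y p.1)) = Vy := rfl
  rw [hVyfold] at h2
  have hcc : Vy * ((L : ℂ) / ε * (∑ S ∈ (Finset.univ.powersetCard k).attach,
      (eval (fun i => y (S.1.orderEmbOfFin (Finset.mem_powersetCard.mp S.2).2 i)) f /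
        ∏ i ∈ S.1, ∏ j ∈ S.1ᶜ, (y i - y j)))) = Vy * coeff (st n) (P hk f) :=
    h2.symm.trans (h1.trans (mul_comm _ _))
  have h6 := mul_left_cancel₀ hVy0 hcc
  rw [eq_div_iff hL0]
  field_simp at h6
  linear_combination h6

end EqLoc

/-- for a symmetric polynomial `f` in `k` variables of degree
exactly `k(n-k)`, the localization sum
`∑_{S ⊆ {1,…,n}, |S| = k} f(y_S) / ∏_{i∈S, j∉S} (yᵢ - yⱼ)`
does not depend on the (pairwise distinct) values `y₁, …, yₙ`. -/
theorem equivariant_pairing_constant (n k : ℕ) (hk : k ≤ n)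
    (f : MvPolynomial (Fin k) ℂ) (hf : f.IsSymmetric)
    (hdeg : f.totalDegree = k * (n - k))
    (y y' : Fin n → ℂ) (hy : Function.Injective y) (hy' : Function.Injective y') :
    ∑ S ∈ (Finset.univ.powersetCard k).attach,
      MvPolynomial.eval
          (fun i => y (S.1.orderEmbOfFin (Finset.mem_powersetCard.mp S.2).2 i)) f /
        ∏ i ∈ S.1, ∏ j ∈ S.1ᶜ, (y i - y j) =
    ∑ S ∈ (Finset.univ.powersetCard k).attach,
      MvPolynomial.eval
          (fun i => y' (S.1.orderEmbOfFin (Finset.mem_powersetCard.mp S.2).2 i)) f /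
        ∏ i ∈ S.1, ∏ j ∈ S.1ᶜ, (y' i - y' j) :=
  (EqLoc.main hk f hf hdeg y hy).trans (EqLoc.main hk f hf hdeg y' hy').symm
end

section
/- Let y_1,...,y_n be pairwise distinct complex numbers, k ≤ n, and let f be a symmetric polynomial in k variables with deg f ≤ k(n-k). Set g = (1/k!)·f(t_1,...,t_k)·∏_{1≤i<j≤k}(t_i - t_j)^2. Then Σ_{S} f(y_S)/∏_{i∈S,j∉S}(y_i - y_j) equals, up to sign, the coefficient of the monomial t_1^{n-1}···t_k^{n-1} in g, where the sum is over k-element subsets S of {1,...,n} and y_S denotes the corresponding tuple of y-values. -/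
open MvPolynomial Finset

section Helpers

lemma leadingCoeff_basisDivisor {x y : ℂ} (h : x ≠ y) :
    (Lagrange.basisDivisor x y).leadingCoeff = (x - y)⁻¹ := by
  rw [Lagrange.basisDivisor, Polynomial.leadingCoeff_mul, Polynomial.leadingCoeff_C,
    Polynomial.leadingCoeff_X_sub_C, mul_one]

lemma coeff_basis {n : ℕ} (y : Fin n → ℂ) (hy : Function.Injective y) (i : Fin n) :
    (Lagrange.basis Finset.univ y i).coeff (n - 1) =
      ∏ b ∈ Finset.univ.erase i, (y i - y b)⁻¹ := by
  have hvs : Set.InjOn y (Finset.univ : Finset (Fin n)) := hy.injOn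
  have hnd := Lagrange.natDegree_basis hvs (Finset.mem_univ i)
  rw [Finset.card_univ, Fintype.card_fin] at hnd
  rw [← hnd, Polynomial.coeff_natDegree, Lagrange.basis, Polynomial.leadingCoeff_prod]
  refine Finset.prod_congr rfl fun j hj => ?_
  exact leadingCoeff_basisDivisor (fun hxy => (Finset.mem_erase.mp hj).1 (hy hxy).symm)

lemma lemA {n : ℕ} (y : Fin n → ℂ) (hy : Function.Injective y) {m : ℕ} (hm : m ≤ n - 1)
    (hn : 1 ≤ n) :
    ∑ a : Fin n, y a ^ m * ∏ b ∈ Finset.univ.erase a, (y a - y b)⁻¹ =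
      if m = n - 1 then 1 else 0 := by
  have hvs : Set.InjOn y (Finset.univ : Finset (Fin n)) := hy.injOn
  have hdeg : ((Polynomial.X : Polynomial ℂ) ^ m).degree < (Finset.univ : Finset (Fin n)).card := by
    rw [Polynomial.degree_X_pow, Finset.card_univ, Fintype.card_fin]
    exact_mod_cast Nat.lt_of_le_pred hn hm
  have h := Lagrange.eq_interpolate (v := y) hvs hdeg
  have h2 := congrArg (fun p => Polynomial.coeff p (n - 1)) h
  simp only [Lagrange.interpolate_apply, Polynomial.finset_sum_coeff,
    Polynomial.coeff_C_mul, Polynomial.eval_pow, Polynomial.eval_X,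
    Polynomial.coeff_X_pow] at h2
  rw [Finset.sum_congr rfl fun a _ => by rw [coeff_basis y hy a]] at h2
  rw [← h2]
  simp [eq_comm]

lemma lemBmono {n k : ℕ} (hk : k ≤ n) (y : Fin n → ℂ) (hy : Function.Injective y)
    (d : Fin k →₀ ℕ) (hd : ∑ i, d i ≤ k * (n - 1)) :
    ∑ a : Fin k → Fin n, (∏ i, y (a i) ^ d i) *
        ∏ i, ∏ b ∈ Finset.univ.erase (a i), (y (a i) - y b)⁻¹ =
      if d = (Finsupp.equivFunOnFinite.symm fun _ : Fin k => n - 1) then 1 else 0 := by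
  have hstep : ∀ a : Fin k → Fin n,
      (∏ i, y (a i) ^ d i) * ∏ i, ∏ b ∈ Finset.univ.erase (a i), (y (a i) - y b)⁻¹
      = ∏ i, (y (a i) ^ d i * ∏ b ∈ Finset.univ.erase (a i), (y (a i) - y b)⁻¹) := fun a =>
    (Finset.prod_mul_distrib).symm
  simp_rw [hstep]
  rw [← Fintype.piFinset_univ,
    Finset.sum_prod_piFinset (Finset.univ : Finset (Fin n))
      (fun i c => y c ^ d i * ∏ b ∈ Finset.univ.erase c, (y c - y b)⁻¹)]
  by_cases hdD : d = (Finsupp.equivFunOnFinite.symm fun _ : Fin k => n - 1)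
  · subst hdD
    rw [if_pos rfl]
    have hn : 1 ≤ n ∨ k = 0 := by omega
    rcases hn with hn | rfl
    · refine Finset.prod_eq_one fun i _ => ?_
      have : (Finsupp.equivFunOnFinite.symm fun _ : Fin k => n - 1) i = n - 1 := rfl
      rw [this, lemA y hy le_rfl hn, if_pos rfl]
    · simp
  · rw [if_neg hdD]
    have hk0 : k ≠ 0 := by
      rintro rfl
      exact hdD (Subsingleton.elim _ _)
    have hn : 1 ≤ n := by omega
    have hex : ∃ j, d j < n - 1 := by
      by_contra hcon
      push_neg at hcon
      apply hdD
      have heq : ∀ i ∈ Finset.univ, (n-1) = d i := by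
        have h1 : ∀ i ∈ (Finset.univ : Finset (Fin k)), n - 1 ≤ d i := fun i _ => hcon i
        have h3 : ∑ i : Fin k, d i = ∑ i : Fin k, (n-1) := by
          have : ∑ _i : Fin k, (n-1 : ℕ) = k * (n-1) := by
            rw [Finset.sum_const, Finset.card_univ, Fintype.card_fin, smul_eq_mul]
          have h2 : ∑ i : Fin k, (n - 1) ≤ ∑ i, d i := Finset.sum_le_sum h1
          omega
        exact (Finset.sum_eq_sum_iff_of_le h1).mp h3.symm
      ext i
      exact (heq i (Finset.mem_univ i)).symm
    obtain ⟨j, hj⟩ := hex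
    refine Finset.prod_eq_zero (Finset.mem_univ j) ?_
    rw [lemA y hy (le_of_lt hj) hn, if_neg (Nat.ne_of_lt hj)]

lemma lemB {n k : ℕ} (hk : k ≤ n) (y : Fin n → ℂ) (hy : Function.Injective y)
    (g : MvPolynomial (Fin k) ℂ) (hg : g.totalDegree ≤ k * (n - 1)) :
    MvPolynomial.coeff (Finsupp.equivFunOnFinite.symm fun _ : Fin k => n - 1) g =
      ∑ a : Fin k → Fin n, MvPolynomial.eval (y ∘ a) g *
        ∏ i : Fin k, ∏ b ∈ Finset.univ.erase (a i), (y (a i) - y b)⁻¹ := by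
  set D : Fin k →₀ ℕ := Finsupp.equivFunOnFinite.symm fun _ : Fin k => n - 1 with hD
  conv_lhs => rw [← MvPolynomial.support_sum_monomial_coeff g]
  rw [MvPolynomial.coeff_sum]
  have hrhs : ∀ a : Fin k → Fin n, MvPolynomial.eval (y ∘ a) g =
      ∑ d ∈ g.support, MvPolynomial.coeff d g * ∏ i, y (a i) ^ d i := by
    intro a
    conv_lhs => rw [← MvPolynomial.support_sum_monomial_coeff g]
    rw [map_sum]
    refine Finset.sum_congr rfl fun d _ => ?_
    rw [MvPolynomial.eval_monomial, Finsupp.prod_pow]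
    rfl
  simp_rw [hrhs, Finset.sum_mul]
  rw [Finset.sum_comm]
  refine Finset.sum_congr rfl fun d hd => ?_
  have hdle : ∑ i, d i ≤ k * (n - 1) := by
    refine le_trans ?_ (le_trans (MvPolynomial.le_totalDegree hd) hg)
    rw [Finsupp.sum_fintype]
    intro i; rfl
  rw [MvPolynomial.coeff_monomial]
  symm
  have := lemBmono hk y hy d hdle
  calc ∑ a : Fin k → Fin n, MvPolynomial.coeff d g * (∏ i, y (a i) ^ d i) *
          ∏ i, ∏ b ∈ Finset.univ.erase (a i), (y (a i) - y b)⁻¹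
      = MvPolynomial.coeff d g * ∑ a : Fin k → Fin n, (∏ i, y (a i) ^ d i) *
          ∏ i, ∏ b ∈ Finset.univ.erase (a i), (y (a i) - y b)⁻¹ := by
        rw [Finset.mul_sum]; exact Finset.sum_congr rfl fun a _ => by ring
    _ = MvPolynomial.coeff d g * (if d = D then 1 else 0) := by rw [this]
    _ = if d = D then MvPolynomial.coeff d g else 0 := by split <;> simp

lemma prod_erase_sign {k : ℕ} (p : Fin k → ℂ) :
    ∏ i : Fin k, ∏ j ∈ Finset.univ.erase i, (p i - p j) =
      (-1 : ℂ) ^ (∑ i : Fin k, (Finset.Ioi i).card) *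
        ∏ i : Fin k, ∏ j ∈ Finset.Ioi i, (p i - p j) ^ 2 := by
  have h1 : ∀ i : Fin k, ∏ j ∈ Finset.univ.erase i, (p i - p j)
      = (∏ j ∈ Finset.Ioi i, (p i - p j)) * ∏ j ∈ Finset.Iio i, (p i - p j) := by
    intro i
    rw [← Finset.prod_disjUnion (Finset.disjoint_Ioi_Iio i)]
    refine Finset.prod_congr ?_ fun _ _ => rfl
    ext j
    simp only [Finset.mem_disjUnion, Finset.mem_Ioi, Finset.mem_Iio, Finset.mem_erase,
      Finset.mem_univ, and_true]
    rw [ne_iff_lt_or_gt]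
    exact or_comm
  simp_rw [h1]
  rw [Finset.prod_mul_distrib]
  have h2 : ∏ i : Fin k, ∏ j ∈ Finset.Iio i, (p i - p j)
      = ∏ i : Fin k, ∏ j ∈ Finset.Ioi i, (p j - p i) := by
    exact Finset.prod_comm' (fun x y => by
      simp [Finset.mem_Iio, Finset.mem_Ioi, and_comm])
  rw [h2, ← Finset.prod_mul_distrib]
  have h3 : ∀ i : Fin k,
      (∏ j ∈ Finset.Ioi i, (p i - p j)) * ∏ j ∈ Finset.Ioi i, (p j - p i)
      = (-1 : ℂ) ^ (Finset.Ioi i).card * ∏ j ∈ Finset.Ioi i, (p i - p j) ^ 2 := by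
    intro i
    rw [← Finset.prod_mul_distrib, ← Finset.prod_const, ← Finset.prod_mul_distrib]
    exact Finset.prod_congr rfl fun j _ => by ring
  simp_rw [h3]
  rw [Finset.prod_mul_distrib, Finset.prod_pow_eq_pow_sum]

lemma Q_perm {k : ℕ} (p : Fin k → ℂ) (σ : Equiv.Perm (Fin k)) :
    ∏ i : Fin k, ∏ j ∈ Finset.Ioi i, (p (σ i) - p (σ j)) ^ 2 =
      ∏ i : Fin k, ∏ j ∈ Finset.Ioi i, (p i - p j) ^ 2 := by
  have key : ∀ q : Fin k → ℂ,
      ∏ i : Fin k, ∏ j ∈ Finset.Ioi i, (q i - q j) ^ 2 = (Matrix.vandermonde q).det ^ 2 := by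
    intro q
    rw [Matrix.det_vandermonde, ← Finset.prod_pow]
    refine Finset.prod_congr rfl fun i _ => ?_
    rw [← Finset.prod_pow]
    exact Finset.prod_congr rfl fun j _ => by ring
  rw [key, key]
  have hsub : Matrix.vandermonde (p ∘ σ) = (Matrix.vandermonde p).submatrix σ id := by
    ext i j; simp [Matrix.vandermonde, Matrix.submatrix]
  have h0 : Matrix.vandermonde (fun i => p (σ i)) = Matrix.vandermonde (p ∘ σ) := rfl
  rw [h0, hsub, Matrix.det_permute]
  rcases Int.units_eq_one_or (Equiv.Perm.sign σ) with h | h <;> simp [h]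

lemma two_N {k : ℕ} : 2 * (∑ i : Fin k, (Finset.Ioi i).card) = k * (k - 1) := by
  have h1 : ∀ i : Fin k, (Finset.Ioi i).card = k - 1 - (i : ℕ) := fun i => Fin.card_Ioi i
  simp_rw [h1]
  rw [Fin.sum_univ_eq_sum_range (fun j => k - 1 - j) k,
    Finset.sum_range_reflect (fun j => j) k, mul_comm, Finset.sum_range_id_mul_two]

end Helpers

section Helpers2

lemma deg_g {n k : ℕ} (hk : k ≤ n) (f : MvPolynomial (Fin k) ℂ)
    (hdeg : f.totalDegree ≤ k * (n - k)) :
    (MvPolynomial.C ((1 : ℂ) / (Nat.factorial k)) * f *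
      ∏ i : Fin k, ∏ j ∈ Finset.Ioi i, (X i - X j) ^ 2).totalDegree ≤ k * (n - 1) := by
  have hXX : ∀ i j : Fin k, ((X i - X j : MvPolynomial (Fin k) ℂ) ^ 2).totalDegree ≤ 2 := by
    intro i j
    refine le_trans (MvPolynomial.totalDegree_pow _ _) ?_
    have := MvPolynomial.totalDegree_sub (X i : MvPolynomial (Fin k) ℂ) (X j)
    rw [MvPolynomial.totalDegree_X, MvPolynomial.totalDegree_X] at this
    omega
  have hV : (∏ i : Fin k, ∏ j ∈ Finset.Ioi i,
      (X i - X j : MvPolynomial (Fin k) ℂ) ^ 2).totalDegree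
      ≤ 2 * ∑ i : Fin k, (Finset.Ioi i).card := by
    refine le_trans (MvPolynomial.totalDegree_finset_prod _ _) ?_
    rw [Finset.mul_sum]
    refine Finset.sum_le_sum fun i _ => ?_
    refine le_trans (MvPolynomial.totalDegree_finset_prod _ _) ?_
    calc ∑ j ∈ Finset.Ioi i, ((X i - X j : MvPolynomial (Fin k) ℂ) ^ 2).totalDegree
        ≤ ∑ _j ∈ Finset.Ioi i, 2 := Finset.sum_le_sum fun j _ => hXX i j
      _ = 2 * (Finset.Ioi i).card := by rw [Finset.sum_const, smul_eq_mul, mul_comm]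
  have h1 : (MvPolynomial.C ((1 : ℂ) / (Nat.factorial k)) * f *
      ∏ i : Fin k, ∏ j ∈ Finset.Ioi i, (X i - X j) ^ 2).totalDegree
      ≤ k * (n - k) + k * (k - 1) := by
    refine le_trans (MvPolynomial.totalDegree_mul _ _) ?_
    have h2 : (MvPolynomial.C ((1 : ℂ) / (Nat.factorial k)) * f).totalDegree ≤ k * (n - k) := by
      refine le_trans (MvPolynomial.totalDegree_mul _ _) ?_
      rw [MvPolynomial.totalDegree_C, zero_add]
      exact hdeg
    have h3 := hV
    rw [two_N] at h3
    omega
  refine le_trans h1 ?_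
  rcases Nat.eq_zero_or_pos k with rfl | hk1
  · simp
  · rw [← Nat.mul_add]
    exact Nat.mul_le_mul_left k (by omega)

noncomputable def invPerm {n k : ℕ} (a : Fin k → Fin n) (h : (Finset.univ.image a).card = k) :
    Fin k → Fin k :=
  fun x => (Finset.orderIsoOfFin _ h).symm
    ⟨a x, Finset.mem_image_of_mem a (Finset.mem_univ x)⟩

lemma orderEmbOfFin_congr {α : Type*} [LinearOrder α] {k : ℕ} {s t : Finset α} (h : s = t)
    (hs : s.card = k) (x : Fin k) : s.orderEmbOfFin hs x = t.orderEmbOfFin (h ▸ hs) x := by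
  subst h; rfl

lemma emb_invPerm {n k : ℕ} (a : Fin k → Fin n) (h : (Finset.univ.image a).card = k)
    (x : Fin k) : (Finset.univ.image a).orderEmbOfFin h (invPerm a h x) = a x := by
  rw [invPerm, ← Finset.coe_orderIsoOfFin_apply, OrderIso.apply_symm_apply]

lemma invPerm_injective {n k : ℕ} (a : Fin k → Fin n) (ha : Function.Injective a)
    (h : (Finset.univ.image a).card = k) : Function.Injective (invPerm a h) := by
  intro x y hxy
  apply ha
  have := congrArg (fun z => (((Finset.orderIsoOfFin _ h) z : _) : Fin n)) hxy
  simpa [invPerm] using this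

lemma sum_inj_eq {n k : ℕ} (T : (Fin k → Fin n) → ℂ) :
    ∑ a ∈ Finset.univ.filter (fun a : Fin k → Fin n => Function.Injective a), T a
      = ∑ S ∈ (Finset.univ.powersetCard k).attach, ∑ σ : Equiv.Perm (Fin k),
          T ((fun i => S.1.orderEmbOfFin (Finset.mem_powersetCard.mp S.2).2 i) ∘ σ) := by
  classical
  rw [← Finset.sum_product']
  symm
  refine Finset.sum_bij'
    (i := fun z _ => (fun i => z.1.1.orderEmbOfFin (Finset.mem_powersetCard.mp z.1.2).2 i) ∘ z.2)
    (j := fun a ha =>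
      have hinj : Function.Injective a := (Finset.mem_filter.mp ha).2
      have hcard : (Finset.univ.image a).card = k := by
        rw [Finset.card_image_of_injective _ hinj, Finset.card_univ, Fintype.card_fin]
      (⟨Finset.univ.image a,
        Finset.mem_powersetCard.mpr ⟨Finset.subset_univ _, hcard⟩⟩,
       Equiv.ofBijective (invPerm a hcard)
         (Finite.injective_iff_bijective.mp (invPerm_injective a hinj hcard))))
    ?_ ?_ ?_ ?_ ?_
  · intro z _
    rw [Finset.mem_filter]
    refine ⟨Finset.mem_univ _, ?_⟩
    exact Function.Injective.comp (z.1.1.orderEmbOfFin (Finset.mem_powersetCard.mp z.1.2).2).injective z.2.injective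
  · intro a ha
    exact Finset.mem_product.mpr ⟨Finset.mem_attach _ _, Finset.mem_univ _⟩
  · -- left inverse : j (i z) = z
    intro z hz
    have himg : Finset.univ.image
        ((fun i => z.1.1.orderEmbOfFin (Finset.mem_powersetCard.mp z.1.2).2 i) ∘ z.2)
        = z.1.1 := by
      rw [← Finset.image_image, Finset.image_univ_equiv]
      apply Finset.coe_injective
      rw [Finset.coe_image, Finset.coe_univ, Set.image_univ]
      exact Finset.range_orderEmbOfFin _ _
    refine Prod.ext (Subtype.ext himg) ?_
    apply Equiv.ext
    intro x
    simp only [Equiv.ofBijective_apply]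
    rw [invPerm]
    rw [OrderIso.symm_apply_eq]
    apply Subtype.ext
    rw [Finset.coe_orderIsoOfFin_apply]
    rw [orderEmbOfFin_congr himg]
    rfl
  · -- right inverse : i (j a) = a
    intro a ha
    funext x
    exact emb_invPerm a _ x
  · intro z hz
    rfl

end Helpers2

section Inner

lemma image_emb {n k : ℕ} (s : Finset (Fin n)) (hc : s.card = k) :
    Finset.univ.image (fun i => s.orderEmbOfFin hc i) = s := by
  apply Finset.coe_injective
  rw [Finset.coe_image, Finset.coe_univ, Set.image_univ]
  exact Finset.range_orderEmbOfFin _ _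

lemma innerSumLemma {n k : ℕ} (y : Fin n → ℂ) (hy : Function.Injective y)
    (f : MvPolynomial (Fin k) ℂ) (hf : f.IsSymmetric)
    (s : Finset (Fin n)) (hc : s.card = k) :
    ∑ σ : Equiv.Perm (Fin k),
      (MvPolynomial.eval (y ∘ ((fun i => s.orderEmbOfFin hc i) ∘ σ))
          (MvPolynomial.C ((1 : ℂ) / (Nat.factorial k)) * f *
            ∏ i : Fin k, ∏ j ∈ Finset.Ioi i, (X i - X j) ^ 2) *
        ∏ i : Fin k, ∏ b ∈ Finset.univ.erase (((fun i => s.orderEmbOfFin hc i) ∘ σ) i),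
          (y (((fun i => s.orderEmbOfFin hc i) ∘ σ) i) - y b)⁻¹)
    = (-1 : ℂ) ^ (∑ i : Fin k, (Finset.Ioi i).card) *
        (MvPolynomial.eval (fun i => y (s.orderEmbOfFin hc i)) f /
          ∏ i ∈ s, ∏ j ∈ sᶜ, (y i - y j)) := by
  classical
  set N : ℕ := ∑ i : Fin k, (Finset.Ioi i).card with hN
  set e : Fin k → Fin n := fun i => s.orderEmbOfFin hc i with he
  have he_inj : Function.Injective e := fun a b hab =>
    (s.orderEmbOfFin hc).injective hab
  have hg_eval : ∀ p : Fin k → ℂ,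
      MvPolynomial.eval p (MvPolynomial.C ((1 : ℂ) / (Nat.factorial k)) * f *
          ∏ i : Fin k, ∏ j ∈ Finset.Ioi i, (X i - X j) ^ 2)
      = (1 / (Nat.factorial k : ℂ)) * MvPolynomial.eval p f *
          ∏ i : Fin k, ∏ j ∈ Finset.Ioi i, (p i - p j) ^ 2 := by
    intro p
    simp
  have hconst : ∀ σ : Equiv.Perm (Fin k),
      (MvPolynomial.eval (y ∘ (e ∘ σ))
          (MvPolynomial.C ((1 : ℂ) / (Nat.factorial k)) * f *
            ∏ i : Fin k, ∏ j ∈ Finset.Ioi i, (X i - X j) ^ 2) *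
        ∏ i : Fin k, ∏ b ∈ Finset.univ.erase ((e ∘ σ) i), (y ((e ∘ σ) i) - y b)⁻¹)
      = (1 / (Nat.factorial k : ℂ)) * MvPolynomial.eval (y ∘ e) f *
          (∏ i : Fin k, ∏ j ∈ Finset.Ioi i, (y (e i) - y (e j)) ^ 2) *
          ∏ i : Fin k, ∏ b ∈ Finset.univ.erase (e i), (y (e i) - y b)⁻¹ := by
    intro σ
    rw [hg_eval]
    have h1 : MvPolynomial.eval (y ∘ (e ∘ σ)) f = MvPolynomial.eval (y ∘ e) f := by
      have h0 : y ∘ (e ∘ σ) = (y ∘ e) ∘ σ := rfl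
      rw [h0, ← MvPolynomial.eval_rename, hf σ]
    have h2 : (∏ i : Fin k, ∏ j ∈ Finset.Ioi i, ((y ∘ (e ∘ σ)) i - (y ∘ (e ∘ σ)) j) ^ 2)
        = ∏ i : Fin k, ∏ j ∈ Finset.Ioi i, (y (e i) - y (e j)) ^ 2 :=
      Q_perm (y ∘ e) σ
    have h3 : (∏ i : Fin k, ∏ b ∈ Finset.univ.erase ((e ∘ σ) i), (y ((e ∘ σ) i) - y b)⁻¹)
        = ∏ i : Fin k, ∏ b ∈ Finset.univ.erase (e i), (y (e i) - y b)⁻¹ :=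
      Equiv.prod_comp σ (fun i => ∏ b ∈ Finset.univ.erase (e i), (y (e i) - y b)⁻¹)
    rw [h1, h2, h3]
  rw [Finset.sum_congr rfl fun σ _ => hconst σ, Finset.sum_const, Finset.card_univ,
    Fintype.card_perm, Fintype.card_fin, nsmul_eq_mul]
  set Q : ℂ := ∏ i : Fin k, ∏ j ∈ Finset.Ioi i, (y (e i) - y (e j)) ^ 2 with hQ
  set D : ℂ := ∏ i ∈ s, ∏ j ∈ sᶜ, (y i - y j) with hD
  have hQne : Q ≠ 0 := by
    rw [hQ]
    refine Finset.prod_ne_zero_iff.mpr fun i _ => Finset.prod_ne_zero_iff.mpr fun j hj => ?_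
    have hij : i ≠ j := ne_of_lt (Finset.mem_Ioi.mp hj)
    exact pow_ne_zero _ (sub_ne_zero.mpr (fun hcon => hij (he_inj (hy hcon))))
  have himg : Finset.univ.image e = s := image_emb s hc
  have hW : (∏ i : Fin k, ∏ b ∈ Finset.univ.erase (e i), (y (e i) - y b)) =
      ((-1 : ℂ) ^ N * Q) * D := by
    have hsplit : ∀ i : Fin k,
        Finset.univ.erase (e i) = (s.erase (e i)) ∪ sᶜ := by
      intro i
      have hei : e i ∈ s := by
        rw [← himg]; exact Finset.mem_image_of_mem e (Finset.mem_univ i)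
      ext b
      simp only [Finset.mem_erase, Finset.mem_univ, and_true, Finset.mem_union,
        Finset.mem_compl]
      constructor
      · intro hb
        by_cases hbs : b ∈ s
        · exact Or.inl ⟨hb, hbs⟩
        · exact Or.inr hbs
      · rintro (⟨hb, _⟩ | hb)
        · exact hb
        · rintro rfl; exact hb hei
    have hdisj : ∀ i : Fin k, Disjoint (s.erase (e i)) sᶜ := fun i =>
      Finset.disjoint_left.mpr fun b hb hb' =>
        (Finset.mem_compl.mp hb') (Finset.mem_of_mem_erase hb)
    have hstep : ∀ i : Fin k, ∏ b ∈ Finset.univ.erase (e i), (y (e i) - y b)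
        = (∏ b ∈ s.erase (e i), (y (e i) - y b)) * ∏ b ∈ sᶜ, (y (e i) - y b) := by
      intro i
      rw [hsplit i, Finset.prod_union (hdisj i)]
    simp_rw [hstep]
    rw [Finset.prod_mul_distrib]
    have hinjOn : ∀ (t : Finset (Fin k)), ∀ x ∈ t, ∀ z ∈ t, e x = e z → x = z :=
      fun t x _ z _ hxz => he_inj hxz
    have hA1 : (∏ i : Fin k, ∏ b ∈ s.erase (e i), (y (e i) - y b))
        = (-1 : ℂ) ^ N * Q := by
      have herase : ∀ i : Fin k, s.erase (e i) = (Finset.univ.erase i).image e := by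
        intro i
        rw [Finset.image_erase he_inj, himg]
      calc ∏ i : Fin k, ∏ b ∈ s.erase (e i), (y (e i) - y b)
          = ∏ i : Fin k, ∏ j ∈ Finset.univ.erase i, (y (e i) - y (e j)) := by
            refine Finset.prod_congr rfl fun i _ => ?_
            rw [herase i, Finset.prod_image (hinjOn _)]
        _ = (-1 : ℂ) ^ N * Q := prod_erase_sign (fun i => y (e i))
    have hA2 : (∏ i : Fin k, ∏ b ∈ sᶜ, (y (e i) - y b)) = D := by
      rw [hD, ← himg, Finset.prod_image (hinjOn _)]
    rw [hA1, hA2]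
  have hWinv : (∏ i : Fin k, ∏ b ∈ Finset.univ.erase (e i), (y (e i) - y b)⁻¹)
      = (((-1 : ℂ) ^ N * Q) * D)⁻¹ := by
    rw [← hW]
    simp only [← Finset.prod_inv_distrib]
  rw [hWinv]
  have hF : MvPolynomial.eval (y ∘ e) f
      = MvPolynomial.eval (fun i => y (s.orderEmbOfFin hc i)) f := rfl
  set F : ℂ := MvPolynomial.eval (fun i => y (s.orderEmbOfFin hc i)) f with hFF
  rw [hF]
  have hinvN : ((-1 : ℂ) ^ N)⁻¹ = (-1 : ℂ) ^ N := by
    rcases neg_one_pow_eq_or ℂ N with h | h <;> rw [h] <;> norm_num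
  have hkf : (Nat.factorial k : ℂ) ≠ 0 := Nat.cast_ne_zero.mpr (Nat.factorial_ne_zero k)
  have h1 : (Nat.factorial k : ℂ) * (1 / (Nat.factorial k : ℂ)) = 1 := by
    field_simp
  have h2 : Q * Q⁻¹ = 1 := mul_inv_cancel₀ hQne
  rw [mul_inv, mul_inv, hinvN, div_eq_mul_inv]
  calc (Nat.factorial k : ℂ) * ((1 / (Nat.factorial k : ℂ)) * F * Q *
          ((-1 : ℂ) ^ N * Q⁻¹ * D⁻¹))
      = ((Nat.factorial k : ℂ) * (1 / (Nat.factorial k : ℂ))) * (Q * Q⁻¹) *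
          ((-1 : ℂ) ^ N * (F * D⁻¹)) := by ring
    _ = (-1 : ℂ) ^ N * (F * D⁻¹) := by rw [h1, h2, one_mul, one_mul]

end Inner

/-- F. Petrov: for pairwise distinct `y₁,…,yₙ ∈ ℂ`, `k ≤ n` and a
symmetric polynomial `f` in `k` variables with `deg f ≤ k(n-k)`, setting
`g = (1/k!)·f·∏_{i<j}(tᵢ-tⱼ)²`, the localization sum
`∑_S f(y_S)/∏_{i∈S,j∉S}(yᵢ-yⱼ)` equals, up to sign, the coefficient of the
monomial `t₁^{n-1}⋯t_k^{n-1}` in `g`. -/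
theorem equivariant_pairing_coeff (n k : ℕ) (hk : k ≤ n) (y : Fin n → ℂ)
    (hy : Function.Injective y) (f : MvPolynomial (Fin k) ℂ)
    (hf : f.IsSymmetric) (hdeg : f.totalDegree ≤ k * (n - k)) :
    let g : MvPolynomial (Fin k) ℂ :=
      C ((1 : ℂ) / (Nat.factorial k)) * f *
        ∏ i : Fin k, ∏ j ∈ Finset.Ioi i, (X i - X j) ^ 2
    ∃ ε : ℂ, (ε = 1 ∨ ε = -1) ∧
      ∑ S ∈ (Finset.univ.powersetCard k).attach,
        MvPolynomial.eval
            (fun i => y (S.1.orderEmbOfFin (Finset.mem_powersetCard.mp S.2).2 i)) f /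
          ∏ i ∈ S.1, ∏ j ∈ S.1ᶜ, (y i - y j) =
      ε * MvPolynomial.coeff (Finsupp.equivFunOnFinite.symm fun _ : Fin k => n - 1) g := by

  intro g
  classical
  refine ⟨(-1 : ℂ) ^ (∑ i : Fin k, (Finset.Ioi i).card),
    neg_one_pow_eq_or ℂ _, ?_⟩
  set N : ℕ := ∑ i : Fin k, (Finset.Ioi i).card with hN
  have hgbody : g = MvPolynomial.C ((1 : ℂ) / (Nat.factorial k)) * f *
      ∏ i : Fin k, ∏ j ∈ Finset.Ioi i, (X i - X j) ^ 2 := rfl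
  have hdg : g.totalDegree ≤ k * (n - 1) := by
    rw [hgbody]; exact deg_g hk f hdeg
  have hcoeff2 : MvPolynomial.coeff (Finsupp.equivFunOnFinite.symm fun _ : Fin k => n - 1) g
      = (-1 : ℂ) ^ N *
        ∑ S ∈ (Finset.univ.powersetCard k).attach,
          MvPolynomial.eval
              (fun i => y (S.1.orderEmbOfFin (Finset.mem_powersetCard.mp S.2).2 i)) f /
            ∏ i ∈ S.1, ∏ j ∈ S.1ᶜ, (y i - y j) := by
    calc MvPolynomial.coeff (Finsupp.equivFunOnFinite.symm fun _ : Fin k => n - 1) g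
        = ∑ a : Fin k → Fin n, MvPolynomial.eval (y ∘ a) g *
            ∏ i : Fin k, ∏ b ∈ Finset.univ.erase (a i), (y (a i) - y b)⁻¹ :=
          lemB hk y hy g hdg
      _ = ∑ a ∈ Finset.univ.filter (fun a : Fin k → Fin n => Function.Injective a),
            MvPolynomial.eval (y ∘ a) g *
              ∏ i : Fin k, ∏ b ∈ Finset.univ.erase (a i), (y (a i) - y b)⁻¹ := by
          symm
          apply Finset.sum_filter_of_ne
          intro a _ hne0
          by_contra hninj
          apply hne0
          obtain ⟨i, j, hij, hne'⟩ := Function.not_injective_iff.mp hninj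
          have hzero : MvPolynomial.eval (y ∘ a) g = 0 := by
            rw [hgbody, map_mul]
            have hzv : MvPolynomial.eval (y ∘ a)
                (∏ i : Fin k, ∏ j ∈ Finset.Ioi i, (X i - X j) ^ 2) = 0 := by
              rw [map_prod]
              rcases hne'.lt_or_gt with h | h
              · refine Finset.prod_eq_zero (Finset.mem_univ i) ?_
                rw [map_prod]
                refine Finset.prod_eq_zero (Finset.mem_Ioi.mpr h) ?_
                simp [Function.comp, hij]
              · refine Finset.prod_eq_zero (Finset.mem_univ j) ?_
                rw [map_prod]
                refine Finset.prod_eq_zero (Finset.mem_Ioi.mpr h) ?_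
                simp [Function.comp, hij]
            rw [hzv, mul_zero]
          rw [hzero, zero_mul]
      _ = ∑ S ∈ (Finset.univ.powersetCard k).attach, ∑ σ : Equiv.Perm (Fin k),
            (MvPolynomial.eval
                (y ∘ ((fun i => S.1.orderEmbOfFin (Finset.mem_powersetCard.mp S.2).2 i) ∘ σ)) g *
              ∏ i : Fin k,
                ∏ b ∈ Finset.univ.erase
                    (((fun i => S.1.orderEmbOfFin (Finset.mem_powersetCard.mp S.2).2 i) ∘ σ) i),
                  (y (((fun i => S.1.orderEmbOfFin (Finset.mem_powersetCard.mp S.2).2 i) ∘ σ) i)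
                    - y b)⁻¹) :=
          sum_inj_eq (fun a => MvPolynomial.eval (y ∘ a) g *
            ∏ i : Fin k, ∏ b ∈ Finset.univ.erase (a i), (y (a i) - y b)⁻¹)
      _ = ∑ S ∈ (Finset.univ.powersetCard k).attach,
            (-1 : ℂ) ^ N *
              (MvPolynomial.eval
                  (fun i => y (S.1.orderEmbOfFin (Finset.mem_powersetCard.mp S.2).2 i)) f /
                ∏ i ∈ S.1, ∏ j ∈ S.1ᶜ, (y i - y j)) := by
          refine Finset.sum_congr rfl fun S _ => ?_
          exact innerSumLemma y hy f hf S.1 (Finset.mem_powersetCard.mp S.2).2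
      _ = (-1 : ℂ) ^ N *
            ∑ S ∈ (Finset.univ.powersetCard k).attach,
              MvPolynomial.eval
                  (fun i => y (S.1.orderEmbOfFin (Finset.mem_powersetCard.mp S.2).2 i)) f /
                ∏ i ∈ S.1, ∏ j ∈ S.1ᶜ, (y i - y j) := by
          rw [Finset.mul_sum]
  rw [hcoeff2, ← mul_assoc, ← pow_add]
  rw [Even.neg_one_pow ⟨N, rfl⟩, one_mul]
end

section
/- Define the sequence a_n by a_1 = 1 and the Segner-type recurrence obtained from the relations x_i^2 + 2Σ_{k=1}^{i-1}(-1)^k x_{i+k}x_{i-k} + (-1)^i x_{2i} = 0 after setting x_1 = u and all other odd-indexed variables to 0; then the resulting even-indexed values satisfy x_{2n} = ±C_{n-1} u^{2n} where C_n is the n-th Catalan number, i.e., |x_{2n}|/u^{2n} satisfies the Catalan recurrence C_n = Σ_{i=0}^{n-1} C_i C_{n-1-i}. -/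
open Polynomial

private lemma catalan_succ_range (n : ℕ) :
    catalan (n + 1) = ∑ i ∈ Finset.range (n + 1), catalan i * catalan (n - i) := by
  rw [catalan_succ', Finset.Nat.sum_antidiagonal_eq_sum_range_succ fun x y => catalan x * catalan y]

private lemma sum_even_odd {A : Type*} [AddCommMonoid A] (f : ℕ → A) (M : ℕ) :
    ∑ k ∈ Finset.range (2 * M), f k
      = ∑ t ∈ Finset.range M, f (2 * t) + ∑ t ∈ Finset.range M, f (2 * t + 1) := by
  induction M with
  | zero => simp
  | succ M ih =>
    rw [show 2 * (M + 1) = 2 * M + 1 + 1 from by ring, Finset.sum_range_succ,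
      Finset.sum_range_succ, ih, Finset.sum_range_succ, Finset.sum_range_succ]
    abel

private lemma cat_even' (s : ℕ) :
    catalan (2 * s + 1)
      = catalan s * catalan s
        + 2 * ∑ t ∈ Finset.range s, catalan (s + 1 + t) * catalan (s - 1 - t) := by
  rw [catalan_succ_range]
  rw [show 2 * s + 1 = s + (s + 1) from by omega, Finset.sum_range_add,
    Finset.sum_range_succ']
  have h0 : catalan (s + 0) * catalan (2 * s - (s + 0)) = catalan s * catalan s := by
    rw [Nat.add_zero, show 2 * s - s = s from by omega]
  have hmid : ∑ i ∈ Finset.range s, catalan (s + (i + 1)) * catalan (2 * s - (s + (i + 1)))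
      = ∑ t ∈ Finset.range s, catalan (s + 1 + t) * catalan (s - 1 - t) := by
    refine Finset.sum_congr rfl fun i hi => ?_
    simp only [Finset.mem_range] at hi
    rw [show 2 * s - (s + (i + 1)) = s - 1 - i from by omega,
      show s + (i + 1) = s + 1 + i from by omega]
  have hfirst : ∑ i ∈ Finset.range s, catalan i * catalan (2 * s - i)
      = ∑ t ∈ Finset.range s, catalan (s + 1 + t) * catalan (s - 1 - t) := by
    rw [← Finset.sum_range_reflect (fun t => catalan (s + 1 + t) * catalan (s - 1 - t)) s]
    refine Finset.sum_congr rfl fun i hi => ?_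
    simp only [Finset.mem_range] at hi
    rw [show s + 1 + (s - 1 - i) = 2 * s - i from by omega,
      show s - 1 - (s - 1 - i) = i from by omega]
    exact mul_comm _ _
  rw [h0, hmid, hfirst]
  ring

private lemma cat_odd' (s : ℕ) :
    catalan (2 * s + 2)
      = 2 * ∑ t ∈ Finset.range (s + 1), catalan (s + 1 + t) * catalan (s - t) := by
  rw [show 2 * s + 2 = (2 * s + 1) + 1 from rfl, catalan_succ_range]
  rw [show 2 * s + 1 + 1 = (s + 1) + (s + 1) from by omega, Finset.sum_range_add]
  have hmid : ∑ i ∈ Finset.range (s + 1), catalan (s + 1 + i) * catalan (2 * s + 1 - (s + 1 + i))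
      = ∑ t ∈ Finset.range (s + 1), catalan (s + 1 + t) * catalan (s - t) := by
    refine Finset.sum_congr rfl fun i hi => ?_
    simp only [Finset.mem_range] at hi
    rw [show 2 * s + 1 - (s + 1 + i) = s - i from by omega]
  have hfirst : ∑ i ∈ Finset.range (s + 1), catalan i * catalan (2 * s + 1 - i)
      = ∑ t ∈ Finset.range (s + 1), catalan (s + 1 + t) * catalan (s - t) := by
    rw [← Finset.sum_range_reflect (fun t => catalan (s + 1 + t) * catalan (s - t)) (s + 1)]
    refine Finset.sum_congr rfl fun i hi => ?_
    simp only [Finset.mem_range] at hi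
    rw [show s + 1 + (s + 1 - 1 - i) = 2 * s + 1 - i from by omega,
      show s - (s + 1 - 1 - i) = i from by omega]
    exact mul_comm _ _
  rw [hmid, hfirst]
  ring

/-- setting `x₀ = 1`, `x₁ = u` and all other odd-indexed variables
to `0` in the defining relations
`xᵢ² + 2∑_{k=1}^{i-1}(-1)^k x_{i+k}x_{i-k} + (-1)^i x_{2i} = 0` of
`H*(OGr(n,2n))` yields Segner's recurrence: the resulting even-indexed values
are `x_{2n} = (-1)^{n-1} C_{n-1} u^{2n}`, where `Cₙ` is the `n`-th Catalan
number. -/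
theorem segner_catalan (x : ℕ → Polynomial ℚ)
    (h0 : x 0 = 1) (h1 : x 1 = X) (hoddzero : ∀ m, 1 ≤ m → x (2 * m + 1) = 0)
    (hrel : ∀ i, 1 ≤ i →
      (x i) ^ 2
        + 2 * ∑ k ∈ Finset.range (i - 1), (-1 : Polynomial ℚ) ^ (k + 1)
            * (x (i + (k + 1)) * x (i - (k + 1)))
        + (-1 : Polynomial ℚ) ^ i * x (2 * i) = 0) :
    ∀ n, 1 ≤ n → x (2 * n) = C ((-1 : ℚ) ^ (n - 1) * catalan (n - 1)) * X ^ (2 * n) := by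
  intro n
  induction n using Nat.strong_induction_on with
  | _ n IH =>
  intro hn
  rcases Nat.even_or_odd n with he | ho
  · -- n = 2 * m, m ≥ 1
    obtain ⟨m, rfl⟩ : ∃ m, n = 2 * m := by obtain ⟨r, hr⟩ := he; exact ⟨r, by omega⟩
    have hm : 1 ≤ m := by omega
    have hr := hrel (2 * m) (by omega)
    have hsum : ∑ k ∈ Finset.range (2 * m - 1), (-1 : Polynomial ℚ) ^ (k + 1)
          * (x (2 * m + (k + 1)) * x (2 * m - (k + 1)))
        = C (∑ t ∈ Finset.range (m - 1),
              ((catalan (m + t) : ℚ) * (catalan (m - 2 - t) : ℚ)))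
            * X ^ (2 * (2 * m)) := by
      rw [show 2 * m - 1 = 2 * (m - 1) + 1 from by omega, Finset.sum_range_succ,
        sum_even_odd]
      have hA : ∑ t ∈ Finset.range (m - 1), (-1 : Polynomial ℚ) ^ (2 * t + 1)
            * (x (2 * m + (2 * t + 1)) * x (2 * m - (2 * t + 1))) = 0 := by
        refine Finset.sum_eq_zero fun t ht => ?_
        rw [show 2 * m + (2 * t + 1) = 2 * (m + t) + 1 from by ring,
          hoddzero (m + t) (by omega)]
        ring
      have hlast : (-1 : Polynomial ℚ) ^ (2 * (m - 1) + 1)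
            * (x (2 * m + (2 * (m - 1) + 1)) * x (2 * m - (2 * (m - 1) + 1))) = 0 := by
        rw [show 2 * m + (2 * (m - 1) + 1) = 2 * (2 * m - 1) + 1 from by omega,
          hoddzero (2 * m - 1) (by omega)]
        ring
      have hB : ∑ t ∈ Finset.range (m - 1), (-1 : Polynomial ℚ) ^ (2 * t + 1 + 1)
            * (x (2 * m + (2 * t + 1 + 1)) * x (2 * m - (2 * t + 1 + 1)))
          = ∑ t ∈ Finset.range (m - 1),
              C ((catalan (m + t) : ℚ) * (catalan (m - 2 - t) : ℚ))
                * X ^ (2 * (2 * m)) := by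
        refine Finset.sum_congr rfl fun t ht => ?_
        simp only [Finset.mem_range] at ht
        rw [show 2 * m + (2 * t + 1 + 1) = 2 * (m + t + 1) from by ring,
          show 2 * m - (2 * t + 1 + 1) = 2 * (m - 1 - t) from by omega,
          IH (m + t + 1) (by omega) (by omega), IH (m - 1 - t) (by omega) (by omega),
          show m + t + 1 - 1 = m + t from by omega,
          show m - 1 - t - 1 = m - 2 - t from by omega]
        have hsgn : (-1 : Polynomial ℚ) ^ (2 * t + 1 + 1) = 1 :=
          Even.neg_one_pow ⟨t + 1, by ring⟩
        have hc : C ((-1 : ℚ) ^ (m + t) * (catalan (m + t) : ℚ))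
              * C ((-1 : ℚ) ^ (m - 2 - t) * (catalan (m - 2 - t) : ℚ))
            = C ((catalan (m + t) : ℚ) * (catalan (m - 2 - t) : ℚ)) := by
          rw [← C_mul]
          congr 1
          have e5 : (-1 : ℚ) ^ (m + t) * (-1 : ℚ) ^ (m - 2 - t) = 1 := by
            rw [← pow_add]; exact Even.neg_one_pow ⟨m - 1, by omega⟩
          linear_combination ((catalan (m + t) : ℚ) * (catalan (m - 2 - t) : ℚ)) * e5
        have hE : (X : Polynomial ℚ) ^ (2 * (m + t + 1)) * X ^ (2 * (m - 1 - t))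
            = X ^ (2 * (2 * m)) := by
          rw [← pow_add]; congr 1; omega
        rw [hsgn, one_mul, ← hc, ← hE]
        ring
      rw [hA, hlast, hB, ← Finset.sum_mul, ← map_sum]
      ring
    rw [IH m (by omega) hm, hsum, Even.neg_one_pow (⟨m, by ring⟩ : Even (2 * m)),
      one_mul] at hr
    have h := cat_even' (m - 1)
    have h' : catalan (2 * (m - 1) + 1)
        = catalan (m - 1) * catalan (m - 1)
          + 2 * ∑ t ∈ Finset.range (m - 1), catalan (m + t) * catalan (m - 2 - t) := by
      rw [h]
      congr 1
      congr 1
      refine Finset.sum_congr rfl fun t ht => ?_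
      simp only [Finset.mem_range] at ht
      rw [show m - 1 + 1 + t = m + t from by omega,
        show m - 1 - 1 - t = m - 2 - t from by omega]
    have hcat : (catalan (2 * m - 1) : ℚ)
        = (catalan (m - 1) : ℚ) * (catalan (m - 1) : ℚ)
          + 2 * ∑ t ∈ Finset.range (m - 1),
              ((catalan (m + t) : ℚ) * (catalan (m - 2 - t) : ℚ)) := by
      rw [show 2 * m - 1 = 2 * (m - 1) + 1 from by omega, h']
      push_cast
      ring
    have hbig : (-1 : ℚ) ^ (2 * m - 1) * (catalan (2 * m - 1) : ℚ)
        = -(((-1 : ℚ) ^ (m - 1) * (catalan (m - 1) : ℚ)) ^ 2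
            + 2 * ∑ t ∈ Finset.range (m - 1),
                ((catalan (m + t) : ℚ) * (catalan (m - 2 - t) : ℚ))) := by
      have hsign : (-1 : ℚ) ^ (2 * m - 1) = -1 := Odd.neg_one_pow ⟨m - 1, by omega⟩
      have hsq : ((-1 : ℚ) ^ (m - 1)) ^ 2 = 1 := by
        rw [← pow_mul]; exact Even.neg_one_pow ⟨m - 1, by ring⟩
      rw [hsign, hcat, mul_pow]
      linear_combination ((catalan (m - 1) : ℚ) * (catalan (m - 1) : ℚ)) * hsq
    rw [hbig]
    simp only [map_neg, map_add, map_pow, map_mul, map_one, map_ofNat] at hr ⊢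
    linear_combination hr
  · -- n = 2 * m + 1
    obtain ⟨m, rfl⟩ : ∃ m, n = 2 * m + 1 := ho
    rcases Nat.eq_zero_or_pos m with rfl | hm
    · -- n = 1
      have hr := hrel 1 le_rfl
      norm_num [h1] at hr ⊢
      linear_combination -hr
    · have hr := hrel (2 * m + 1) (by omega)
      have hsum : ∑ k ∈ Finset.range (2 * m + 1 - 1), (-1 : Polynomial ℚ) ^ (k + 1)
            * (x (2 * m + 1 + (k + 1)) * x (2 * m + 1 - (k + 1)))
          = C (∑ t ∈ Finset.range m,
                ((catalan (m + t) : ℚ) * (catalan (m - 1 - t) : ℚ)))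
              * X ^ (2 * (2 * m + 1)) := by
        rw [show 2 * m + 1 - 1 = 2 * m from rfl, sum_even_odd]
        have hOdd : ∑ t ∈ Finset.range m, (-1 : Polynomial ℚ) ^ (2 * t + 1 + 1)
              * (x (2 * m + 1 + (2 * t + 1 + 1)) * x (2 * m + 1 - (2 * t + 1 + 1))) = 0 := by
          refine Finset.sum_eq_zero fun t ht => ?_
          rw [show 2 * m + 1 + (2 * t + 1 + 1) = 2 * (m + t + 1) + 1 from by ring,
            hoddzero (m + t + 1) (by omega)]
          ring
        have hEven : ∑ t ∈ Finset.range m, (-1 : Polynomial ℚ) ^ (2 * t + 1)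
              * (x (2 * m + 1 + (2 * t + 1)) * x (2 * m + 1 - (2 * t + 1)))
            = ∑ t ∈ Finset.range m,
                C ((catalan (m + t) : ℚ) * (catalan (m - 1 - t) : ℚ))
                  * X ^ (2 * (2 * m + 1)) := by
          refine Finset.sum_congr rfl fun t ht => ?_
          simp only [Finset.mem_range] at ht
          rw [show 2 * m + 1 + (2 * t + 1) = 2 * (m + t + 1) from by ring,
            show 2 * m + 1 - (2 * t + 1) = 2 * (m - t) from by omega,
            IH (m + t + 1) (by omega) (by omega), IH (m - t) (by omega) (by omega),
            show m + t + 1 - 1 = m + t from by omega,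
            show m - t - 1 = m - 1 - t from by omega]
          have hsgn : (-1 : Polynomial ℚ) ^ (2 * t + 1) = -1 :=
            Odd.neg_one_pow ⟨t, rfl⟩
          have hc : C ((-1 : ℚ) ^ (m + t) * (catalan (m + t) : ℚ))
                * C ((-1 : ℚ) ^ (m - 1 - t) * (catalan (m - 1 - t) : ℚ))
              = -C ((catalan (m + t) : ℚ) * (catalan (m - 1 - t) : ℚ)) := by
            rw [← C_mul, ← map_neg]
            congr 1
            have e5 : (-1 : ℚ) ^ (m + t) * (-1 : ℚ) ^ (m - 1 - t) = -1 := by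
              rw [← pow_add]; exact Odd.neg_one_pow ⟨m - 1, by omega⟩
            linear_combination ((catalan (m + t) : ℚ) * (catalan (m - 1 - t) : ℚ)) * e5
          have hE : (X : Polynomial ℚ) ^ (2 * (m + t + 1)) * X ^ (2 * (m - t))
              = X ^ (2 * (2 * m + 1)) := by
            rw [← pow_add]; congr 1; omega
          rw [hsgn, ← hE]
          linear_combination (-(X ^ (2 * (m + t + 1)) * X ^ (2 * (m - t)))) * hc
        rw [hOdd, hEven, ← Finset.sum_mul, ← map_sum]
        ring
      rw [hoddzero m hm, hsum, Odd.neg_one_pow (⟨m, rfl⟩ : Odd (2 * m + 1))] at hr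
      have h := cat_odd' (m - 1)
      rw [show 2 * (m - 1) + 2 = 2 * m from by omega] at h
      have hbig : (-1 : ℚ) ^ (2 * m + 1 - 1) * (catalan (2 * m + 1 - 1) : ℚ)
          = 2 * ∑ t ∈ Finset.range m,
                ((catalan (m + t) : ℚ) * (catalan (m - 1 - t) : ℚ)) := by
        rw [show 2 * m + 1 - 1 = 2 * m from rfl,
          Even.neg_one_pow (⟨m, by ring⟩ : Even (2 * m)), one_mul, h]
        push_cast
        rw [show m - 1 + 1 = m from by omega]
      rw [hbig]
      simp only [map_mul, map_ofNat] at hr ⊢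
      linear_combination -hr
end
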